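/- arXiv:2412.05030 — 7 statements merged into one kernel-verified Lean document; each statement's English description precedes it below -/
import Mathlib

section
/- Let φ and ψ be scale functions (satisfying LU conditions with positive exponents). Then ∫₀¹ φ(s)/(s ψ(s)) ds < ∞ if and only if ∫₀¹ ds/ψ(φ⁻¹(s)) < ∞. -/
open Real Set MeasureTheory ENNReal

/-- A scale function satisfying `LU(α₁, α₂)`. -/
def LU (α₁ α₂ : ℝ) (ψ : ℝ → ℝ) : Prop :=
  ContinuousOn ψ (Ici 0) ∧ StrictMonoOn ψ (Ici 0) ∧ ψ 0 = 0 ∧ ψ 1 = 1 ∧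
    ∃ C : ℝ, 1 ≤ C ∧ ∀ r R : ℝ, 0 < r → r ≤ R →
      C⁻¹ * (R / r) ^ α₁ ≤ ψ R / ψ r ∧ ψ R / ψ r ≤ C * (R / r) ^ α₂

lemma enn_sandwich {x y c K : ℝ≥0∞} (hc0 : c ≠ 0) (hc : c ≠ ⊤) (hK : K ≠ ⊤)
    (h1 : c * y ≤ x) (h2 : x ≤ K * y) : x < ⊤ ↔ y < ⊤ := by
  constructor
  · intro hx
    by_contra hy
    rw [not_lt, top_le_iff] at hy
    rw [hy, ENNReal.mul_top hc0] at h1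
    exact (hx.ne (top_le_iff.mp h1)).elim
  · intro hy
    exact lt_of_le_of_lt h2 (ENNReal.mul_lt_top hK.lt_top hy)

lemma iUnion_Ioc_of_antitone {a : ℕ → ℝ} (hanti : Antitone a)
    (hlim : Filter.Tendsto a Filter.atTop (nhds 0)) :
    (⋃ n, Ioc (a (n + 1)) (a n)) = Ioc 0 (a 0) := by
  have hpos : ∀ n, 0 ≤ a n := fun n =>
    le_of_tendsto hlim (Filter.eventually_atTop.2 ⟨n, fun m hm => hanti hm⟩)
  ext x
  simp only [mem_iUnion, mem_Ioc]
  constructor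
  · rintro ⟨n, h1, h2⟩
    exact ⟨lt_of_le_of_lt (hpos (n + 1)) h1, h2.trans (hanti (Nat.zero_le n))⟩
  · rintro ⟨hx0, hx1⟩
    have hex : ∃ n, a n < x := by
      rcases (hlim.eventually (gt_mem_nhds hx0)).exists with ⟨n, hn⟩
      exact ⟨n, hn⟩
    classical
    have h0 : ¬ a 0 < x := not_lt.2 hx1
    obtain ⟨m, hm⟩ : ∃ m, Nat.find hex = m + 1 := by
      rcases Nat.exists_eq_succ_of_ne_zero (fun h => h0 (h ▸ Nat.find_spec hex)) with ⟨m, hm⟩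
      exact ⟨m, hm⟩
    refine ⟨m, hm ▸ Nat.find_spec hex, not_lt.1 (Nat.find_min hex (hm ▸ m.lt_succ_self))⟩

lemma pairwise_disjoint_Ioc_of_antitone {a : ℕ → ℝ} (hanti : Antitone a) :
    Pairwise (Function.onFun Disjoint (fun n => Ioc (a (n + 1)) (a n))) := by
  have key : ∀ m n, m < n → Disjoint (Ioc (a (m+1)) (a m)) (Ioc (a (n+1)) (a n)) := by
    intro m n hmn
    rw [Set.Ioc_disjoint_Ioc]
    exact le_max_of_le_left (min_le_of_right_le (hanti hmn))
  intro m n hmn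
  rcases hmn.lt_or_gt with h | h
  · exact key m n h
  · exact (key n m h).symm

lemma lu_block {α C q : ℝ} {f : ℝ → ℝ} (hq0 : 0 < q) (hα : 0 ≤ α)
    (hfpos : ∀ r : ℝ, 0 < r → 0 < f r)
    (hLU : ∀ r R : ℝ, 0 < r → r ≤ R → f R / f r ≤ C * (R / r) ^ α)
    {bnd s : ℝ} (hbnd : 0 < bnd) (h1 : q * bnd ≤ s) (h2 : s ≤ bnd) :
    f bnd ≤ (C * q⁻¹ ^ α) * f s := by
  have hs : 0 < s := lt_of_lt_of_le (mul_pos hq0 hbnd) h1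
  have h := hLU s bnd hs h2
  have hC : (1:ℝ) ≤ C := by
    have := hLU s s hs le_rfl
    simpa [div_self (hfpos s hs).ne', div_self hs.ne'] using this
  have hds : bnd / s ≤ q⁻¹ := by
    rw [div_le_iff₀ hs]
    calc bnd = q⁻¹ * (q * bnd) := by field_simp
    _ ≤ q⁻¹ * s := mul_le_mul_of_nonneg_left h1 (inv_nonneg.2 hq0.le)
  have h3 : (bnd / s) ^ α ≤ q⁻¹ ^ α :=
    Real.rpow_le_rpow (div_nonneg hbnd.le hs.le) hds hα
  have h4 : f bnd / f s ≤ C * q⁻¹ ^ α :=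
    h.trans (mul_le_mul_of_nonneg_left h3 (by linarith))
  rwa [div_le_iff₀ (hfpos s hs)] at h4

theorem stmt_5 (β₁ β₂ γ₁ γ₂ : ℝ) (hβ₁ : 0 < β₁) (hβ : β₁ ≤ β₂)
    (hγ₁ : 0 < γ₁) (hγ : γ₁ ≤ γ₂)
    (φ ψ φinv : ℝ → ℝ) (hφ : LU β₁ β₂ φ) (hψ : LU γ₁ γ₂ ψ)
    (hinv₁ : ∀ r : ℝ, 0 ≤ r → φinv (φ r) = r)
    (hinv₂ : ∀ t : ℝ, 0 ≤ t → φ (φinv t) = t) :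
    IntegrableOn (fun s => φ s / (s * ψ s)) (Ioc (0 : ℝ) 1) ↔
      IntegrableOn (fun s => 1 / ψ (φinv s)) (Ioc (0 : ℝ) 1) := by
  obtain ⟨hφc, hφm, hφ0, hφ1, Cφ, hCφ, hφLU⟩ := hφ
  obtain ⟨hψc, hψm, hψ0, hψ1, Cψ, hCψ, hψLU⟩ := hψ
  have hφmono : MonotoneOn φ (Ici 0) := hφm.monotoneOn
  have hψmono : MonotoneOn ψ (Ici 0) := hψm.monotoneOn
  have hφpos : ∀ r : ℝ, 0 < r → 0 < φ r := fun r hr => by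
    have := hφm (Set.self_mem_Ici) (Set.mem_Ici.2 hr.le) hr
    rwa [hφ0] at this
  have hψpos : ∀ r : ℝ, 0 < r → 0 < ψ r := fun r hr => by
    have := hψm (Set.self_mem_Ici) (Set.mem_Ici.2 hr.le) hr
    rwa [hψ0] at this
  have hCφ0 : (0:ℝ) < Cφ := lt_of_lt_of_le one_pos hCφ
  have hCψ0 : (0:ℝ) < Cψ := lt_of_lt_of_le one_pos hCψ
  -- the ratio q
  set q : ℝ := (1 / (2 * Cφ)) ^ (1 / β₁) with hq_def
  have h2C : (0:ℝ) < 1 / (2 * Cφ) := by positivity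
  have hq0 : 0 < q := Real.rpow_pos_of_pos h2C _
  have hq1 : q < 1 := by
    apply Real.rpow_lt_one h2C.le ?_ (by positivity)
    rw [div_lt_one (by positivity)]; linarith
  have hqβ : q ^ β₁ = 1 / (2 * Cφ) := by
    rw [hq_def, ← Real.rpow_mul h2C.le, one_div_mul_cancel hβ₁.ne', Real.rpow_one]
  -- halving property
  have hhalf : ∀ r : ℝ, 0 < r → φ (q * r) ≤ φ r / 2 := by
    intro r hr
    have hqr : 0 < q * r := mul_pos hq0 hr
    have h := (hφLU (q * r) r hqr (by nlinarith)).1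
    have hrq : r / (q * r) = q⁻¹ := by
      field_simp
    rw [hrq, Real.inv_rpow hq0.le, hqβ] at h
    have he : Cφ⁻¹ * (1 / (2 * Cφ))⁻¹ = 2 := by field_simp
    rw [he] at h
    have hp := hφpos _ hqr
    rw [le_div_iff₀ hp] at h
    linarith
  -- the dyadic sequence
  set b : ℕ → ℝ := fun n => q ^ n with hb_def
  have hbpos : ∀ n, 0 < b n := fun n => pow_pos hq0 n
  have hbsucc : ∀ n, b (n + 1) = q * b n := fun n => by
    simp only [hb_def, pow_succ]; ring
  have hbanti : Antitone b := fun m n h =>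
    pow_le_pow_of_le_one hq0.le hq1.le h
  have hb0 : b 0 = 1 := pow_zero q
  have hblim : Filter.Tendsto b Filter.atTop (nhds 0) :=
    tendsto_pow_atTop_nhds_zero_of_lt_one hq0.le hq1
  have hbmem : ∀ n, b n ∈ Ici (0:ℝ) := fun n => (hbpos n).le
  have hφb_half : ∀ n, φ (b (n + 1)) ≤ φ (b n) / 2 := fun n => by
    rw [hbsucc n]; exact hhalf (b n) (hbpos n)
  have hφbanti : Antitone (fun n => φ (b n)) := fun m n h =>
    hφmono (hbmem n) (hbmem m) (hbanti h)
  have hφblim : Filter.Tendsto (fun n => φ (b n)) Filter.atTop (nhds 0) := by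
    have hbound : ∀ n, φ (b n) ≤ (1/2) ^ n := by
      intro n
      induction n with
      | zero => simp [hb0, hφ1]
      | succ n ih =>
        calc φ (b (n+1)) ≤ φ (b n) / 2 := hφb_half n
        _ ≤ (1/2)^n / 2 := by linarith
        _ = (1/2)^(n+1) := by ring
    exact squeeze_zero (fun n => (hφpos _ (hbpos n)).le) hbound
      (tendsto_pow_atTop_nhds_zero_of_lt_one (by norm_num) (by norm_num))
  -- comparability constants
  set Aφ : ℝ := Cφ * q⁻¹ ^ β₂ with hAφ_def
  set Aψ : ℝ := Cψ * q⁻¹ ^ γ₂ with hAψ_def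
  have hAφ0 : 0 < Aφ := mul_pos hCφ0 (Real.rpow_pos_of_pos (by positivity) _)
  have hAψ0 : 0 < Aψ := mul_pos hCψ0 (Real.rpow_pos_of_pos (by positivity) _)
  have hφblock : ∀ n, ∀ s : ℝ, b (n+1) ≤ s → s ≤ b n → φ (b n) ≤ Aφ * φ s := by
    intro n s h1 h2
    exact lu_block hq0 (le_trans hβ₁.le hβ) hφpos (fun r R hr hrR => (hφLU r R hr hrR).2)
      (hbpos n) (by rw [← hbsucc n]; exact h1) h2
  have hψblock : ∀ n, ∀ s : ℝ, b (n+1) ≤ s → s ≤ b n → ψ (b n) ≤ Aψ * ψ s := by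
    intro n s h1 h2
    exact lu_block hq0 (le_trans hγ₁.le hγ) hψpos (fun r R hr hrR => (hψLU r R hr hrR).2)
      (hbpos n) (by rw [← hbsucc n]; exact h1) h2
  -- inverse function facts
  have hsurj : ∀ t : ℝ, t ∈ Icc (0:ℝ) 1 → φinv t ∈ Icc (0:ℝ) 1 ∧ φ (φinv t) = t := by
    intro t ht
    have hIVT : t ∈ φ '' Icc 0 1 := by
      apply intermediate_value_Icc (by norm_num : (0:ℝ) ≤ 1) (hφc.mono Icc_subset_Ici_self)
      rw [hφ0, hφ1]; exact ht
    obtain ⟨r, hr, hrt⟩ := hIVT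
    have heq : φinv t = r := by rw [← hrt, hinv₁ r hr.1]
    exact ⟨heq ▸ hr, by rw [heq, hrt]⟩
  -- the comparison sum
  set u : ℕ → ℝ≥0∞ := fun n => ENNReal.ofReal (φ (b n) / ψ (b n)) with hu_def
  -- LHS dyadic decomposition
  have hSunion : (⋃ n, Ioc (b (n+1)) (b n)) = Ioc (0:ℝ) 1 := by
    rw [iUnion_Ioc_of_antitone hbanti hblim, hb0]
  have hLsplit : ∫⁻ x in Ioc (0:ℝ) 1, ENNReal.ofReal (φ x / (x * ψ x)) =
      ∑' n, ∫⁻ x in Ioc (b (n+1)) (b n), ENNReal.ofReal (φ x / (x * ψ x)) := by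
    rw [← hSunion, lintegral_iUnion (fun n => measurableSet_Ioc)
      (pairwise_disjoint_Ioc_of_antitone hbanti)]
  have hLup : ∀ n, ∫⁻ x in Ioc (b (n+1)) (b n), ENNReal.ofReal (φ x / (x * ψ x)) ≤
      ENNReal.ofReal (Aψ / q) * u n := by
    intro n
    have hψb := hψpos _ (hbpos n)
    have hφb := hφpos _ (hbpos n)
    set M : ℝ := φ (b n) / (q * b n * (ψ (b n) / Aψ)) with hM_def
    have hM0 : 0 ≤ M := by
      apply div_nonneg hφb.le
      have : 0 < q * b n * (ψ (b n) / Aψ) := by positivity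
      exact this.le
    have hM : ∀ x ∈ Ioc (b (n+1)) (b n), ENNReal.ofReal (φ x / (x * ψ x)) ≤ ENNReal.ofReal M := by
      intro x hx
      apply ENNReal.ofReal_le_ofReal
      have hx0 : 0 < x := (hbpos (n+1)).trans hx.1
      apply div_le_div₀ hφb.le (hφmono hx0.le (hbpos n).le hx.2) (by positivity) ?_
      have hψx : ψ (b n) / Aψ ≤ ψ x := by
        rw [div_le_iff₀ hAψ0]
        have := hψblock n x hx.1.le hx.2; linarith
      have hqb : q * b n ≤ x := by rw [← hbsucc n]; exact hx.1.le
      exact mul_le_mul hqb hψx (by positivity) hx0.le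
    calc ∫⁻ x in Ioc (b (n+1)) (b n), ENNReal.ofReal (φ x / (x * ψ x))
        ≤ ∫⁻ _ in Ioc (b (n+1)) (b n), ENNReal.ofReal M :=
          setLIntegral_mono' measurableSet_Ioc hM
      _ = ENNReal.ofReal M * volume (Ioc (b (n+1)) (b n)) := setLIntegral_const _ _
      _ ≤ ENNReal.ofReal M * ENNReal.ofReal (b n) := by
          rw [Real.volume_Ioc]
          exact mul_le_mul_right (ENNReal.ofReal_le_ofReal (by linarith [hbpos (n+1)])) _
      _ = ENNReal.ofReal (Aψ / q) * u n := by
          rw [← ENNReal.ofReal_mul hM0, hu_def]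
          simp only
          rw [← ENNReal.ofReal_mul (by positivity : (0:ℝ) ≤ Aψ / q)]
          congr 1
          rw [hM_def]
          have hbn0 := (hbpos n).ne'
          field_simp
  have hLlo : ∀ n, ENNReal.ofReal ((1 - q) / Aφ) * u n ≤
      ∫⁻ x in Ioc (b (n+1)) (b n), ENNReal.ofReal (φ x / (x * ψ x)) := by
    intro n
    have hψb := hψpos _ (hbpos n)
    have hφb := hφpos _ (hbpos n)
    set m : ℝ := (φ (b n) / Aφ) / (b n * ψ (b n)) with hm_def
    have hm0 : 0 ≤ m := by positivity
    have hm : ∀ x ∈ Ioc (b (n+1)) (b n), ENNReal.ofReal m ≤ ENNReal.ofReal (φ x / (x * ψ x)) := by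
      intro x hx
      apply ENNReal.ofReal_le_ofReal
      have hx0 : 0 < x := (hbpos (n+1)).trans hx.1
      apply div_le_div₀ (hφpos x hx0).le ?_ (mul_pos hx0 (hψpos x hx0)) ?_
      · rw [div_le_iff₀ hAφ0]
        have := hφblock n x hx.1.le hx.2; linarith
      · exact mul_le_mul hx.2 (hψmono hx0.le (hbpos n).le hx.2) (hψpos x hx0).le (hbpos n).le
    calc ENNReal.ofReal ((1 - q) / Aφ) * u n
        = ENNReal.ofReal m * volume (Ioc (b (n+1)) (b n)) := by
          rw [Real.volume_Ioc, hbsucc n, hu_def]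
          simp only
          rw [← ENNReal.ofReal_mul (div_nonneg (by linarith) hAφ0.le),
            ← ENNReal.ofReal_mul hm0]
          congr 1
          rw [hm_def]
          have hbn0 := (hbpos n).ne'
          field_simp
      _ = ∫⁻ _ in Ioc (b (n+1)) (b n), ENNReal.ofReal m := (setLIntegral_const _ _).symm
      _ ≤ ∫⁻ x in Ioc (b (n+1)) (b n), ENNReal.ofReal (φ x / (x * ψ x)) :=
          setLIntegral_mono' measurableSet_Ioc hm
  -- RHS dyadic decomposition
  have hTunion : (⋃ n, Ioc (φ (b (n+1))) (φ (b n))) = Ioc (0:ℝ) 1 := by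
    have h := iUnion_Ioc_of_antitone (a := fun n => φ (b n)) hφbanti hφblim
    rw [h]
    simp [hb0, hφ1]
  have hRsplit : ∫⁻ x in Ioc (0:ℝ) 1, ENNReal.ofReal (1 / ψ (φinv x)) =
      ∑' n, ∫⁻ x in Ioc (φ (b (n+1))) (φ (b n)), ENNReal.ofReal (1 / ψ (φinv x)) := by
    rw [← hTunion, lintegral_iUnion (fun n => measurableSet_Ioc)
      (pairwise_disjoint_Ioc_of_antitone hφbanti)]
  have hloc : ∀ n, ∀ t ∈ Ioc (φ (b (n+1))) (φ (b n)), b (n+1) ≤ φinv t ∧ φinv t ≤ b n := by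
    intro n t ht
    have hφbn1 := hφpos _ (hbpos (n+1))
    have ht0 : 0 < t := hφbn1.trans ht.1
    have ht1 : t ≤ 1 := le_trans ht.2 (by
      have := hφbanti (Nat.zero_le n)
      simpa [hb0, hφ1] using this)
    obtain ⟨hr, hrt⟩ := hsurj t ⟨ht0.le, ht1⟩
    constructor
    · by_contra hcon
      push_neg at hcon
      have : φ (φinv t) < φ (b (n+1)) := hφm (mem_Ici.2 hr.1) (hbmem (n+1)) hcon
      rw [hrt] at this
      linarith [ht.1]
    · by_contra hcon
      push_neg at hcon
      have : φ (b n) < φ (φinv t) := hφm (hbmem n) (mem_Ici.2 hr.1) hcon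
      rw [hrt] at this
      linarith [ht.2]
  have hRup : ∀ n, ∫⁻ x in Ioc (φ (b (n+1))) (φ (b n)), ENNReal.ofReal (1 / ψ (φinv x)) ≤
      ENNReal.ofReal Aψ * u n := by
    intro n
    have hψb := hψpos _ (hbpos n)
    have hub : ∀ x ∈ Ioc (φ (b (n+1))) (φ (b n)), ENNReal.ofReal (1 / ψ (φinv x)) ≤
        ENNReal.ofReal (Aψ / ψ (b n)) := by
      intro x hx
      apply ENNReal.ofReal_le_ofReal
      obtain ⟨h1, h2⟩ := hloc n x hx
      have hr0 : 0 < φinv x := (hbpos (n+1)).trans_le h1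
      have hblk := hψblock n (φinv x) h1 h2
      rw [div_le_div_iff₀ (hψpos _ hr0) hψb]
      linarith
    calc ∫⁻ x in Ioc (φ (b (n+1))) (φ (b n)), ENNReal.ofReal (1 / ψ (φinv x))
        ≤ ∫⁻ _ in Ioc (φ (b (n+1))) (φ (b n)), ENNReal.ofReal (Aψ / ψ (b n)) :=
          setLIntegral_mono' measurableSet_Ioc hub
      _ = ENNReal.ofReal (Aψ / ψ (b n)) * volume (Ioc (φ (b (n+1))) (φ (b n))) :=
          setLIntegral_const _ _
      _ ≤ ENNReal.ofReal (Aψ / ψ (b n)) * ENNReal.ofReal (φ (b n)) := by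
          rw [Real.volume_Ioc]
          exact mul_le_mul_right (ENNReal.ofReal_le_ofReal
            (by linarith [hφpos _ (hbpos (n+1))])) _
      _ = ENNReal.ofReal Aψ * u n := by
          rw [hu_def]
          simp only
          rw [← ENNReal.ofReal_mul (div_nonneg hAψ0.le hψb.le),
            ← ENNReal.ofReal_mul hAψ0.le]
          congr 1
          ring
  have hRlo : ∀ n, ENNReal.ofReal (1/2 : ℝ) * u n ≤
      ∫⁻ x in Ioc (φ (b (n+1))) (φ (b n)), ENNReal.ofReal (1 / ψ (φinv x)) := by
    intro n
    have hψb := hψpos _ (hbpos n)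
    have hφb := hφpos _ (hbpos n)
    have hlb : ∀ x ∈ Ioc (φ (b (n+1))) (φ (b n)), ENNReal.ofReal (1 / ψ (b n)) ≤
        ENNReal.ofReal (1 / ψ (φinv x)) := by
      intro x hx
      apply ENNReal.ofReal_le_ofReal
      obtain ⟨h1, h2⟩ := hloc n x hx
      have hr0 : 0 < φinv x := (hbpos (n+1)).trans_le h1
      exact one_div_le_one_div_of_le (hψpos _ hr0) (hψmono hr0.le (hbpos n).le h2)
    calc ENNReal.ofReal (1/2 : ℝ) * u n
        = ENNReal.ofReal (1 / ψ (b n)) * ENNReal.ofReal (φ (b n) / 2) := by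
          rw [hu_def]
          simp only
          rw [← ENNReal.ofReal_mul (by norm_num : (0:ℝ) ≤ 1/2),
            ← ENNReal.ofReal_mul (one_div_nonneg.2 hψb.le)]
          congr 1
          ring
      _ ≤ ENNReal.ofReal (1 / ψ (b n)) * volume (Ioc (φ (b (n+1))) (φ (b n))) := by
          rw [Real.volume_Ioc]
          exact mul_le_mul_right (ENNReal.ofReal_le_ofReal (by linarith [hφb_half n])) _
      _ = ∫⁻ _ in Ioc (φ (b (n+1))) (φ (b n)), ENNReal.ofReal (1 / ψ (b n)) :=
          (setLIntegral_const _ _).symm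
      _ ≤ ∫⁻ x in Ioc (φ (b (n+1))) (φ (b n)), ENNReal.ofReal (1 / ψ (φinv x)) :=
          setLIntegral_mono' measurableSet_Ioc hlb
  -- summed two-sided bounds
  set U : ℝ≥0∞ := ∑' n, u n with hU_def
  have hLlo_tot : ENNReal.ofReal ((1 - q) / Aφ) * U ≤
      ∫⁻ x in Ioc (0:ℝ) 1, ENNReal.ofReal (φ x / (x * ψ x)) := by
    rw [hLsplit, hU_def, ← ENNReal.tsum_mul_left]
    exact ENNReal.tsum_le_tsum hLlo
  have hLup_tot : ∫⁻ x in Ioc (0:ℝ) 1, ENNReal.ofReal (φ x / (x * ψ x)) ≤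
      ENNReal.ofReal (Aψ / q) * U := by
    rw [hLsplit, hU_def, ← ENNReal.tsum_mul_left]
    exact ENNReal.tsum_le_tsum hLup
  have hRlo_tot : ENNReal.ofReal (1/2 : ℝ) * U ≤
      ∫⁻ x in Ioc (0:ℝ) 1, ENNReal.ofReal (1 / ψ (φinv x)) := by
    rw [hRsplit, hU_def, ← ENNReal.tsum_mul_left]
    exact ENNReal.tsum_le_tsum hRlo
  have hRup_tot : ∫⁻ x in Ioc (0:ℝ) 1, ENNReal.ofReal (1 / ψ (φinv x)) ≤
      ENNReal.ofReal Aψ * U := by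
    rw [hRsplit, hU_def, ← ENNReal.tsum_mul_left]
    exact ENNReal.tsum_le_tsum hRup
  have hiff1 : (∫⁻ x in Ioc (0:ℝ) 1, ENNReal.ofReal (φ x / (x * ψ x))) < ⊤ ↔ U < ⊤ :=
    enn_sandwich (ENNReal.ofReal_pos.2 (div_pos (by linarith) hAφ0)).ne'
      ENNReal.ofReal_ne_top ENNReal.ofReal_ne_top hLlo_tot hLup_tot
  have hiff2 : (∫⁻ x in Ioc (0:ℝ) 1, ENNReal.ofReal (1 / ψ (φinv x))) < ⊤ ↔ U < ⊤ :=
    enn_sandwich (ENNReal.ofReal_pos.2 (by norm_num : (0:ℝ) < 1/2)).ne'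
      ENNReal.ofReal_ne_top ENNReal.ofReal_ne_top hRlo_tot hRup_tot
  -- measurability
  have hIsub : Ioc (0:ℝ) 1 ⊆ Ici (0:ℝ) := fun x hx => le_of_lt hx.1
  have hFmeas : AEStronglyMeasurable (fun s => φ s / (s * ψ s))
      (volume.restrict (Ioc (0:ℝ) 1)) := by
    apply ContinuousOn.aestronglyMeasurable ?_ measurableSet_Ioc
    apply ContinuousOn.div (hφc.mono hIsub)
      (continuousOn_id.mul (hψc.mono hIsub))
    intro x hx
    exact (mul_pos hx.1 (hψpos x hx.1)).ne'
  have hGmeas : AEStronglyMeasurable (fun s => 1 / ψ (φinv s))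
      (volume.restrict (Ioc (0:ℝ) 1)) := by
    have hmono : Monotone (fun t => ψ (φinv (max 0 (min t 1)))) := by
      intro t₁ t₂ h12
      have hs1 : max 0 (min t₁ 1) ∈ Icc (0:ℝ) 1 :=
        ⟨le_max_left _ _, max_le (by norm_num) (min_le_right _ _)⟩
      have hs2 : max 0 (min t₂ 1) ∈ Icc (0:ℝ) 1 :=
        ⟨le_max_left _ _, max_le (by norm_num) (min_le_right _ _)⟩
      obtain ⟨hr1, he1⟩ := hsurj _ hs1
      obtain ⟨hr2, he2⟩ := hsurj _ hs2
      have hle : max 0 (min t₁ 1) ≤ max 0 (min t₂ 1) :=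
        max_le_max le_rfl (min_le_min h12 le_rfl)
      have hinvle : φinv (max 0 (min t₁ 1)) ≤ φinv (max 0 (min t₂ 1)) := by
        by_contra hcon
        push_neg at hcon
        have := hφm (mem_Ici.2 hr2.1) (mem_Ici.2 hr1.1) hcon
        rw [he1, he2] at this
        linarith
      exact hψmono (mem_Ici.2 hr1.1) (mem_Ici.2 hr2.1) hinvle
    have hmeas : Measurable (fun t => 1 / ψ (φinv (max 0 (min t 1)))) :=
      measurable_const.div hmono.measurable
    apply hmeas.aestronglyMeasurable.congr
    apply Filter.eventuallyEq_of_mem (self_mem_ae_restrict measurableSet_Ioc)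
    intro x hx
    simp only
    rw [min_eq_left hx.2, max_eq_right hx.1.le]
  -- nonnegativity
  have hFnn : 0 ≤ᵐ[volume.restrict (Ioc (0:ℝ) 1)] fun s => φ s / (s * ψ s) := by
    filter_upwards [self_mem_ae_restrict measurableSet_Ioc] with x hx
    exact div_nonneg (hφpos x hx.1).le (mul_nonneg hx.1.le (hψpos x hx.1).le)
  have hGnn : 0 ≤ᵐ[volume.restrict (Ioc (0:ℝ) 1)] fun s => 1 / ψ (φinv s) := by
    filter_upwards [self_mem_ae_restrict measurableSet_Ioc] with x hx
    obtain ⟨hr, he⟩ := hsurj x ⟨hx.1.le, hx.2⟩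
    have hψr : 0 ≤ ψ (φinv x) := by
      have := hψmono Set.self_mem_Ici (mem_Ici.2 hr.1) hr.1
      rwa [hψ0] at this
    exact one_div_nonneg.2 hψr
  have hLiff : IntegrableOn (fun s => φ s / (s * ψ s)) (Ioc (0:ℝ) 1) ↔
      (∫⁻ x in Ioc (0:ℝ) 1, ENNReal.ofReal (φ x / (x * ψ x))) < ⊤ := by
    constructor
    · intro h
      exact (hasFiniteIntegral_iff_ofReal hFnn).1 h.2
    · intro h
      exact ⟨hFmeas, (hasFiniteIntegral_iff_ofReal hFnn).2 h⟩
  have hRiff : IntegrableOn (fun s => 1 / ψ (φinv s)) (Ioc (0:ℝ) 1) ↔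
      (∫⁻ x in Ioc (0:ℝ) 1, ENNReal.ofReal (1 / ψ (φinv x))) < ⊤ := by
    constructor
    · intro h
      exact (hasFiniteIntegral_iff_ofReal hGnn).1 h.2
    · intro h
      exact ⟨hGmeas, (hasFiniteIntegral_iff_ofReal hGnn).2 h⟩
  rw [hLiff, hRiff, hiff1, hiff2]
end

section
/- Let φ, ψ be scale functions satisfying LU(β₁,β₂) and LU(γ₁,γ₂) respectively, and set μ(t) := 1/ψ(φ⁻¹(t)). Then the Bernstein function φ̄(λ) := ∫₀^∞ (1 - e^{-λt}) μ(t) dt/t satisfies φ̄(λ) ≤ C λ ∫₀^∞ e^{-λ s} μ(s) ds for all λ > 0, for some constant C depending only on the LU constants. -/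
open Real Set MeasureTheory

lemma exp_aux {x : ℝ} : x * Real.exp (-x) ≤ 1 - Real.exp (-x) := by
  have h1 := Real.add_one_le_exp x
  have h2 : Real.exp (-x) * Real.exp x = 1 := by rw [← Real.exp_add]; simp
  nlinarith [Real.exp_pos (-x), Real.exp_pos x]

lemma exp_integral (lam t : ℝ) (ht : 0 ≤ t) :
    ∫ s in Ioo (0:ℝ) t, lam * Real.exp (-lam * s) = 1 - Real.exp (-lam * t) := by
  have hd : ∀ s ∈ Icc (0:ℝ) t, HasDerivAt (fun s => -Real.exp (-lam * s))
      (lam * Real.exp (-lam * s)) s := by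
    intro s _
    have := (((hasDerivAt_id s).const_mul (-lam)).exp).neg
    simpa [mul_comm, Pi.neg_def] using this
  have hc : Continuous fun s : ℝ => lam * Real.exp (-lam * s) := by continuity
  have := intervalIntegral.integral_eq_sub_of_hasDerivAt (f := fun s => -Real.exp (-lam * s))
    (fun s hs => hd s (by rwa [uIcc_of_le ht] at hs)) (hc.intervalIntegrable 0 t)
  rw [← MeasureTheory.integral_Ioc_eq_integral_Ioo, ← intervalIntegral.integral_of_le ht, this]
  simp; ring

set_option maxHeartbeats 1000000 in
theorem stmt_10 (β₁ β₂ γ₁ γ₂ : ℝ) (hβ₁ : 0 < β₁) (hβ : β₁ ≤ β₂)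
    (hγ₁ : 0 < γ₁) (hγ : γ₁ ≤ γ₂)
    (φ ψ φinv : ℝ → ℝ) (hφ : LU β₁ β₂ φ) (hψ : LU γ₁ γ₂ ψ)
    (hinv₁ : ∀ r : ℝ, 0 ≤ r → φinv (φ r) = r)
    (hinv₂ : ∀ t : ℝ, 0 ≤ t → φ (φinv t) = t) :
    ∃ C : ℝ, 0 < C ∧ ∀ lam : ℝ, 0 < lam →
      (∫ t in Ioi (0 : ℝ), (1 - Real.exp (-lam * t)) * (ψ (φinv t))⁻¹ / t) ≤
        C * lam * ∫ s in Ioi (0 : ℝ), Real.exp (-lam * s) * (ψ (φinv s))⁻¹ := by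
  obtain ⟨hφc, hφm, hφ0, hφ1, Cφ, hCφ1, hCφ⟩ := hφ
  obtain ⟨hψc, hψm, hψ0, hψ1, Cψ, hCψ1, hCψ⟩ := hψ
  have hβ₂ : 0 < β₂ := hβ₁.trans_le hβ
  have hCφ0 : 0 < Cφ := lt_of_lt_of_le one_pos hCφ1
  have hCψ0 : 0 < Cψ := lt_of_lt_of_le one_pos hCψ1
  set α : ℝ := γ₁ / β₂ with hα_def
  have hα : 0 < α := div_pos hγ₁ hβ₂
  set K : ℝ := Cψ * Cφ ^ α with hK_def
  have hCφα : (1:ℝ) ≤ Cφ ^ α := by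
    calc (1:ℝ) = 1 ^ α := (Real.one_rpow α).symm
    _ ≤ Cφ ^ α := Real.rpow_le_rpow zero_le_one hCφ1 hα.le
  have hK1 : (1:ℝ) ≤ K := by nlinarith
  have hK0 : 0 < K := lt_of_lt_of_le one_pos hK1
  set C : ℝ := K / α with hC_def
  have hC0 : 0 < C := div_pos hK0 hα
  -- positivity of φ, ψ on positives
  have hφpos : ∀ r : ℝ, 0 < r → 0 < φ r := fun r hr => by
    have := hφm (self_mem_Ici) (le_of_lt hr : r ∈ Ici 0) hr
    rwa [hφ0] at this
  have hψpos : ∀ r : ℝ, 0 < r → 0 < ψ r := fun r hr => by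
    have := hψm (self_mem_Ici) (le_of_lt hr : r ∈ Ici 0) hr
    rwa [hψ0] at this
  -- φinv is nonnegative
  have hφinv_nonneg : ∀ t : ℝ, 0 ≤ t → 0 ≤ φinv t := by
    intro t ht
    -- find r ≥ 0 with φ r = t via IVT
    set R : ℝ := max 1 ((Cφ * t) ^ (1/β₁)) with hR_def
    have hR1 : (1:ℝ) ≤ R := le_max_left _ _
    have hR0 : (0:ℝ) ≤ R := zero_le_one.trans hR1
    have hbig : t ≤ φ R := by
      have h1 := (hCφ 1 R one_pos hR1).1
      rw [hφ1, div_one, div_one] at h1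
      have h2 : Cφ * t ≤ R ^ β₁ := by
        have h3 : (Cφ * t) ^ (1/β₁) ≤ R := le_max_right _ _
        have h4 : ((Cφ * t) ^ (1/β₁)) ^ β₁ ≤ R ^ β₁ :=
          Real.rpow_le_rpow (Real.rpow_nonneg (by positivity) _) h3 hβ₁.le
        rwa [← Real.rpow_mul (by positivity), one_div, inv_mul_cancel₀ hβ₁.ne', Real.rpow_one] at h4
      calc t = Cφ⁻¹ * (Cφ * t) := by field_simp
      _ ≤ Cφ⁻¹ * R ^ β₁ := by
          apply mul_le_mul_of_nonneg_left h2 (by positivity)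
      _ ≤ φ R := h1
    have hmem : t ∈ Icc (φ 0) (φ R) := by
      constructor
      · rw [hφ0]; exact ht
      · exact hbig
    obtain ⟨r, hr, hrt⟩ := intermediate_value_Icc hR0 (hφc.mono (Icc_subset_Ici_self)) hmem
    rw [← hrt, hinv₁ r hr.1]
    exact hr.1
  have hφinv_pos : ∀ t : ℝ, 0 < t → 0 < φinv t := by
    intro t ht
    rcases lt_or_eq_of_le (hφinv_nonneg t ht.le) with h | h
    · exact h
    · exfalso
      have := hinv₂ t ht.le
      rw [← h, hφ0] at this
      linarith
  have hφinv_mono : ∀ s t : ℝ, 0 < s → s ≤ t → φinv s ≤ φinv t := by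
    intro s t hs hst
    have hs' := hφinv_nonneg s hs.le
    have ht' := hφinv_nonneg t (hs.le.trans hst)
    have : φ (φinv s) ≤ φ (φinv t) := by
      rw [hinv₂ s hs.le, hinv₂ t (hs.le.trans hst)]; exact hst
    exact (hφm.le_iff_le hs' ht').1 this
  set μ : ℝ → ℝ := fun t => (ψ (φinv t))⁻¹ with hμ_def
  have hμpos : ∀ t : ℝ, 0 < t → 0 < μ t := fun t ht =>
    inv_pos.2 (hψpos _ (hφinv_pos t ht))
  have hμanti : AntitoneOn μ (Ioi (0:ℝ)) := by
    intro s hs t ht hst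
    have h1 : ψ (φinv s) ≤ ψ (φinv t) :=
      hψm.monotoneOn (hφinv_nonneg s (le_of_lt hs)) (hφinv_nonneg t (le_of_lt ht))
        (hφinv_mono s t hs hst)
    exact inv_anti₀ (hψpos _ (hφinv_pos s hs)) h1
  have hμmeas : AEMeasurable μ (volume.restrict (Ioi (0:ℝ))) :=
    aemeasurable_restrict_of_antitoneOn measurableSet_Ioi hμanti
  -- decay estimate
  have hdecay : ∀ s t : ℝ, 0 < s → s ≤ t → μ t ≤ K * μ s * (s / t) ^ α := by
    intro s t hs hst
    have ht : 0 < t := hs.trans_le hst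
    set a := φinv s with ha_def
    set b := φinv t with hb_def
    have ha : 0 < a := hφinv_pos s hs
    have hb : 0 < b := hφinv_pos t ht
    have hab : a ≤ b := hφinv_mono s t hs hst
    have h1 : t / s ≤ Cφ * (b / a) ^ β₂ := by
      have := (hCφ a b ha hab).2
      rwa [hinv₂ s hs.le, hinv₂ t ht.le] at this
    have h2 : Cψ⁻¹ * (b / a) ^ γ₁ ≤ ψ b / ψ a := (hCψ a b ha hab).1
    set X : ℝ := t / s / Cφ with hX_def
    have hX0 : 0 < X := by positivity
    have hXba : X ^ (1/β₂) ≤ b / a := by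
      have h3 : X ≤ (b / a) ^ β₂ := by
        rw [hX_def, div_le_iff₀' hCφ0]; exact h1
      have h4 : X ^ (1/β₂) ≤ ((b / a) ^ β₂) ^ (1/β₂) :=
        Real.rpow_le_rpow hX0.le h3 (by positivity)
      rwa [← Real.rpow_mul (by positivity), mul_one_div, div_self hβ₂.ne', Real.rpow_one] at h4
    have h5 : Cψ⁻¹ * X ^ α ≤ ψ b / ψ a := by
      refine le_trans ?_ h2
      apply mul_le_mul_of_nonneg_left _ (by positivity)
      have : X ^ α = (X ^ (1/β₂)) ^ γ₁ := by
        rw [← Real.rpow_mul hX0.le, one_div, hα_def, div_eq_inv_mul]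
      rw [this]
      exact Real.rpow_le_rpow (by positivity) hXba hγ₁.le
    have hψa : 0 < ψ a := hψpos _ ha
    have hψb : 0 < ψ b := hψpos _ hb
    have h6 : Cψ⁻¹ * X ^ α * ψ a ≤ ψ b := by
      rw [← le_div_iff₀ hψa] at *; exact h5
    have h7 : (ψ b)⁻¹ ≤ (Cψ⁻¹ * X ^ α * ψ a)⁻¹ := by
      apply inv_anti₀ (by positivity) h6
    have h8 : (Cψ⁻¹ * X ^ α * ψ a)⁻¹ = Cψ * (X ^ α)⁻¹ * (ψ a)⁻¹ := by
      field_simp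
    have h9 : (X ^ α)⁻¹ = Cφ ^ α * (s / t) ^ α := by
      rw [← Real.inv_rpow hX0.le, ← Real.mul_rpow hCφ0.le (by positivity)]
      congr 1
      rw [hX_def]
      field_simp
    calc μ t = (ψ b)⁻¹ := rfl
    _ ≤ (Cψ⁻¹ * X ^ α * ψ a)⁻¹ := h7
    _ = Cψ * (Cφ ^ α * (s/t) ^ α) * (ψ a)⁻¹ := by rw [h8, h9]
    _ = K * μ s * (s / t) ^ α := by simp only [hμ_def, hK_def, ← ha_def]; ring
  -- tail estimate
  have htail : ∀ s : ℝ, 0 < s → IntegrableOn (fun t => μ t / t) (Ioi s) ∧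
      (∫ t in Ioi s, μ t / t) ≤ C * μ s := by
    intro s hs
    have hbound : ∀ t ∈ Ioi s, μ t / t ≤ K * μ s * s ^ α * t ^ (-α - 1) := by
      intro t ht
      rw [mem_Ioi] at ht
      have ht0 : 0 < t := hs.trans ht
      have h1 : μ t ≤ K * μ s * (s / t) ^ α := hdecay s t hs ht.le
      have h2 : (s / t) ^ α = s ^ α * (t ^ α)⁻¹ := by
        rw [Real.div_rpow hs.le ht0.le, div_eq_mul_inv]
      have h3 : t ^ (-α - 1) = (t ^ α)⁻¹ * t⁻¹ := by
        rw [show -α - 1 = -α + (-1) by ring, Real.rpow_add ht0, Real.rpow_neg_one,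
          Real.rpow_neg ht0.le]
      rw [div_eq_mul_inv, h3]
      calc μ t * t⁻¹ ≤ (K * μ s * (s/t) ^ α) * t⁻¹ := by
            apply mul_le_mul_of_nonneg_right h1 (by positivity)
      _ = K * μ s * s ^ α * ((t ^ α)⁻¹ * t⁻¹) := by rw [h2]; ring
    have hpow_int : IntegrableOn (fun t : ℝ => t ^ (-α - 1)) (Ioi s) :=
      integrableOn_Ioi_rpow_of_lt (by linarith) hs
    have hg_int : IntegrableOn (fun t : ℝ => K * μ s * s ^ α * t ^ (-α - 1)) (Ioi s) :=
      hpow_int.const_mul _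
    have hmeas : AEMeasurable (fun t => μ t / t) (volume.restrict (Ioi s)) := by
      have h := hμmeas.mono_measure (Measure.restrict_mono (Ioi_subset_Ioi hs.le) le_rfl)
      exact h.div aemeasurable_id
    have hae : ∀ᵐ t ∂(volume.restrict (Ioi s)), ‖μ t / t‖ ≤ K * μ s * s ^ α * t ^ (-α - 1) := by
      rw [ae_restrict_iff' measurableSet_Ioi]
      refine ae_of_all _ fun t ht => ?_
      rw [mem_Ioi] at ht
      have ht0 : 0 < t := hs.trans ht
      have := (hμpos t ht0).le
      rw [Real.norm_eq_abs, abs_of_nonneg (by positivity)]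
      exact hbound t ht
    have hint : IntegrableOn (fun t => μ t / t) (Ioi s) :=
      Integrable.mono' hg_int hmeas.aestronglyMeasurable hae
    refine ⟨hint, ?_⟩
    have h1 : (∫ t in Ioi s, μ t / t) ≤ ∫ t in Ioi s, K * μ s * s ^ α * t ^ (-α - 1) := by
      exact integral_mono_ae hint hg_int
        ((ae_restrict_iff' measurableSet_Ioi).2 (ae_of_all _ hbound))
    have h3 : ∫ t in Ioi s, K * μ s * s ^ α * t ^ (-α - 1) =
        K * μ s * s ^ α * ∫ t in Ioi s, t ^ (-α - 1) := integral_const_mul _ _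
    have h4 : ∫ t in Ioi s, t ^ (-α - 1) = s ^ (-α) / α := by
      rw [integral_Ioi_rpow_of_lt (by linarith) hs, show -α - 1 + 1 = -α by ring, neg_div_neg_eq]
    have h5 : s ^ α * s ^ (-α) = 1 := by
      rw [← Real.rpow_add hs]; simp
    calc (∫ t in Ioi s, μ t / t) ≤ K * μ s * s ^ α * (s ^ (-α) / α) := by rw [← h4, ← h3]; exact h1
    _ = K * μ s * (s ^ α * s ^ (-α)) / α := by ring
    _ = C * μ s := by rw [h5, hC_def]; ring
  -- measurability of the basic integrands
  have hexp_meas : ∀ lam : ℝ, Measurable fun s : ℝ => Real.exp (-lam * s) :=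
    fun lam => Real.measurable_exp.comp (measurable_id.const_mul (-lam))
  refine ⟨C, hC0, ?_⟩
  intro lam hlam
  set g : ℝ → ℝ := fun s => Real.exp (-lam * s) * μ s with hg_def
  set h : ℝ → ℝ := fun t => (1 - Real.exp (-lam * t)) * μ t / t with hh_def
  show (∫ t in Ioi (0:ℝ), h t) ≤ C * lam * ∫ s in Ioi (0:ℝ), g s
  have hgnn : ∀ᵐ s ∂volume.restrict (Ioi (0:ℝ)), 0 ≤ g s := by
    rw [ae_restrict_iff' measurableSet_Ioi]
    refine ae_of_all _ fun s hs => ?_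
    have := (hμpos s hs).le
    simp only [hg_def]
    positivity
  have hhnn : ∀ᵐ t ∂volume.restrict (Ioi (0:ℝ)), 0 ≤ h t := by
    rw [ae_restrict_iff' measurableSet_Ioi]
    refine ae_of_all _ fun t ht => ?_
    rw [mem_Ioi] at ht
    have h1 := (hμpos t ht).le
    have h2 : Real.exp (-lam * t) ≤ 1 := by
      rw [show (1:ℝ) = Real.exp 0 by simp]
      apply Real.exp_le_exp.2; nlinarith
    simp only [hh_def]
    have h3 : 0 ≤ 1 - Real.exp (-lam * t) := by linarith
    positivity
  have hgmeas : AEMeasurable g (volume.restrict (Ioi (0:ℝ))) :=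
    ((hexp_meas lam).aemeasurable.mul hμmeas)
  have hhmeas : AEMeasurable h (volume.restrict (Ioi (0:ℝ))) := by
    exact ((measurable_const.sub (hexp_meas lam)).aemeasurable.mul hμmeas).div
      measurable_id.aemeasurable
  by_cases hgint : IntegrableOn g (Ioi (0:ℝ))
  · -- main case
    set ν := volume.restrict (Ioi (0:ℝ)) with hν_def
    set F : ℝ × ℝ → ENNReal := fun p =>
      Set.indicator {q : ℝ × ℝ | q.1 < q.2}
        (fun q => ENNReal.ofReal (lam * Real.exp (-lam * q.1) * (μ q.2 / q.2))) p with hF_def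
    have hFmeas : AEMeasurable F (ν.prod ν) := by
      apply AEMeasurable.indicator
      · have h1 : AEMeasurable (fun q : ℝ × ℝ => lam * Real.exp (-lam * q.1)) (ν.prod ν) :=
          (((hexp_meas lam).comp measurable_fst).const_mul lam).aemeasurable
        have h2 : AEMeasurable (fun q : ℝ × ℝ => μ q.2 / q.2) (ν.prod ν) := by
          have h3 := hμmeas.comp_quasiMeasurePreserving
            (Measure.quasiMeasurePreserving_snd (μ := ν) (ν := ν))
          exact h3.div measurable_snd.aemeasurable
        exact (h1.mul h2).ennreal_ofReal
      · exact measurableSet_lt measurable_fst measurable_snd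
    have hA : ∀ t ∈ Ioi (0:ℝ), (∫⁻ s, F (s, t) ∂ν) =
        ENNReal.ofReal ((1 - Real.exp (-lam * t)) * μ t / t) := by
      intro t ht
      rw [mem_Ioi] at ht
      have hind : (fun s => F (s, t)) = (Iio t).indicator
          (fun s => ENNReal.ofReal (lam * Real.exp (-lam * s) * (μ t / t))) := by
        funext s
        simp only [hF_def, Set.indicator, mem_setOf_eq, mem_Iio]
      rw [hind, lintegral_indicator measurableSet_Iio, hν_def,
        Measure.restrict_restrict measurableSet_Iio, Set.Iio_inter_Ioi]
      have hint' : IntegrableOn (fun s => lam * Real.exp (-lam * s) * (μ t / t)) (Ioo 0 t) := by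
        apply IntegrableOn.mono_set _ Ioo_subset_Icc_self
        exact Continuous.integrableOn_Icc
          ((continuous_const.mul (Real.continuous_exp.comp (continuous_const.mul continuous_id))).mul
            continuous_const)
      have hnn' : ∀ᵐ s ∂volume.restrict (Ioo (0:ℝ) t),
          0 ≤ lam * Real.exp (-lam * s) * (μ t / t) := by
        refine ae_of_all _ fun s => ?_
        have h1 := (hμpos t ht).le
        positivity
      rw [← ofReal_integral_eq_lintegral_ofReal hint' hnn']
      congr 1
      rw [MeasureTheory.integral_mul_const, exp_integral lam t ht.le, mul_div_assoc]
    have hB : ∀ s ∈ Ioi (0:ℝ), (∫⁻ t, F (s, t) ∂ν) ≤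
        ENNReal.ofReal (C * lam) * ENNReal.ofReal (Real.exp (-lam * s) * μ s) := by
      intro s hs
      rw [mem_Ioi] at hs
      have hind : (fun t => F (s, t)) = (Ioi s).indicator
          (fun t => ENNReal.ofReal (lam * Real.exp (-lam * s) * (μ t / t))) := by
        funext t
        simp only [hF_def, Set.indicator, mem_setOf_eq, mem_Ioi]
      rw [hind, lintegral_indicator measurableSet_Ioi, hν_def,
        Measure.restrict_restrict measurableSet_Ioi,
        inter_eq_left.2 (Ioi_subset_Ioi hs.le)]
      have heq : ∀ t : ℝ, ENNReal.ofReal (lam * Real.exp (-lam * s) * (μ t / t)) =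
          ENNReal.ofReal (lam * Real.exp (-lam * s)) * ENNReal.ofReal (μ t / t) :=
        fun t => ENNReal.ofReal_mul (by positivity)
      simp_rw [heq]
      rw [lintegral_const_mul' _ _ ENNReal.ofReal_ne_top]
      have hnn2 : ∀ᵐ t ∂volume.restrict (Ioi s), 0 ≤ μ t / t := by
        rw [ae_restrict_iff' measurableSet_Ioi]
        refine ae_of_all _ fun t ht => ?_
        rw [mem_Ioi] at ht
        have h1 := (hμpos t (hs.trans ht)).le
        have h2 : (0:ℝ) < t := hs.trans ht
        positivity
      have h1 : (∫⁻ t in Ioi s, ENNReal.ofReal (μ t / t)) ≤ ENNReal.ofReal (C * μ s) := by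
        rw [← ofReal_integral_eq_lintegral_ofReal (htail s hs).1 hnn2]
        exact ENNReal.ofReal_le_ofReal (htail s hs).2
      calc ENNReal.ofReal (lam * Real.exp (-lam * s)) * ∫⁻ t in Ioi s, ENNReal.ofReal (μ t / t)
          ≤ ENNReal.ofReal (lam * Real.exp (-lam * s)) * ENNReal.ofReal (C * μ s) :=
            mul_le_mul_right h1 _
      _ = ENNReal.ofReal (C * lam) * ENNReal.ofReal (Real.exp (-lam * s) * μ s) := by
            rw [← ENNReal.ofReal_mul (by positivity), ← ENNReal.ofReal_mul (by positivity)]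
            congr 1
            ring
    have hswap : (∫⁻ t, ENNReal.ofReal (h t) ∂ν) = ∫⁻ s, ∫⁻ t, F (s, t) ∂ν ∂ν := by
      have h1 : (∫⁻ t, ENNReal.ofReal (h t) ∂ν) = ∫⁻ t, (∫⁻ s, F (s, t) ∂ν) ∂ν := by
        rw [hν_def]
        refine setLIntegral_congr_fun measurableSet_Ioi (fun t ht => ?_)
        exact (hA t ht).symm
      rw [h1]
      exact (lintegral_lintegral_swap (f := fun s t => F (s, t)) hFmeas).symm
    have hL_le : (∫⁻ t, ENNReal.ofReal (h t) ∂ν) ≤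
        ENNReal.ofReal (C * lam) * ENNReal.ofReal (∫ s in Ioi (0:ℝ), g s) := by
      rw [hswap]
      have h2 : (∫⁻ s, ∫⁻ t, F (s, t) ∂ν ∂ν) ≤
          ∫⁻ s, ENNReal.ofReal (C * lam) * ENNReal.ofReal (g s) ∂ν :=
        lintegral_mono_ae ((ae_restrict_iff' measurableSet_Ioi).2
          (ae_of_all _ fun s hs => hB s hs))
      refine h2.trans (le_of_eq ?_)
      rw [lintegral_const_mul' _ _ ENNReal.ofReal_ne_top, hν_def,
        ofReal_integral_eq_lintegral_ofReal hgint hgnn]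
    have hfin : (∫⁻ t, ENNReal.ofReal (h t) ∂ν) ≠ ⊤ :=
      (hL_le.trans_lt (ENNReal.mul_lt_top ENNReal.ofReal_lt_top ENNReal.ofReal_lt_top)).ne
    have hhint : IntegrableOn h (Ioi (0:ℝ)) := by
      refine ⟨hhmeas.aestronglyMeasurable, ?_⟩
      rw [hasFiniteIntegral_iff_ofReal hhnn]
      exact lt_top_iff_ne_top.2 hfin
    have hLeq : (∫ t in Ioi (0:ℝ), h t) = (∫⁻ t, ENNReal.ofReal (h t) ∂ν).toReal :=
      integral_eq_lintegral_of_nonneg_ae hhnn hhmeas.aestronglyMeasurable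
    rw [hLeq]
    have hmono := ENNReal.toReal_mono
      (ENNReal.mul_ne_top ENNReal.ofReal_ne_top ENNReal.ofReal_ne_top) hL_le
    refine hmono.trans (le_of_eq ?_)
    rw [ENNReal.toReal_mul, ENNReal.toReal_ofReal (by positivity),
      ENNReal.toReal_ofReal (integral_nonneg_of_ae hgnn)]
  · -- degenerate case : both sides vanish
    have hLHS : ¬ IntegrableOn h (Ioi (0:ℝ)) := by
      intro hL
      apply hgint
      have hdom : Integrable (fun t => (1/lam) * h t) (volume.restrict (Ioi (0:ℝ))) :=
        hL.const_mul _
      refine Integrable.mono' hdom hgmeas.aestronglyMeasurable ?_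
      rw [ae_restrict_iff' measurableSet_Ioi]
      refine ae_of_all _ fun s hs => ?_
      rw [mem_Ioi] at hs
      have hμs := (hμpos s hs).le
      have e1 : (lam * s) * Real.exp (-(lam * s)) ≤ 1 - Real.exp (-(lam * s)) := exp_aux
      have key : Real.exp (-lam * s) * μ s * (lam * s) ≤ (1 - Real.exp (-lam * s)) * μ s := by
        have := mul_le_mul_of_nonneg_right e1 hμs
        rw [show -(lam * s) = -lam * s by ring] at this
        nlinarith
      rw [Real.norm_eq_abs, abs_of_nonneg (by simp only [hg_def]; positivity)]
      have h2 := mul_le_mul_of_nonneg_right key (by positivity : (0:ℝ) ≤ (lam * s)⁻¹)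
      calc g s = Real.exp (-lam * s) * μ s * (lam * s) * (lam * s)⁻¹ := by
            simp only [hg_def]; rw [mul_inv_cancel_right₀ (by positivity)]
      _ ≤ (1 - Real.exp (-lam * s)) * μ s * (lam * s)⁻¹ := h2
      _ = 1 / lam * h s := by
            simp only [hh_def]
            field_simp
    rw [integral_undef hLHS, integral_undef hgint]
    simp
end

section
/- Let φ, ψ be scale functions with LU doubling bounds, and φ̄(λ) := ∫₀^∞ (1 - e^{-λ t})/(t ψ(φ⁻¹(t))) dt (assumed finite). For r ≤ 1 suppose φ_c(r) ≤ φ_j(r) with φ = φ_c ∧ φ_j, and define the truncated Bernstein function φ^W(λ; r) := ∫₀^{φ(r)} (1 - e^{-λ t})/(t ψ(φ⁻¹(t))) dt. Then there exists C > 0 such that for all r ≤ 1, φ̄(φ_j(r)⁻¹) ≤ φ^W(φ_j(r)⁻¹; r) + C/ψ(r). -/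
open Real Set MeasureTheory

set_option maxHeartbeats 1000000 in
theorem stmt_11 (β₁c β₂c β₁j β₂j γ₁ γ₂ : ℝ)
    (h1c : 0 < β₁c) (hc : β₁c ≤ β₂c) (h1j : 0 < β₁j) (hj : β₁j ≤ β₂j)
    (hγ₁ : 0 < γ₁) (hγ : γ₁ ≤ γ₂)
    (φc φj ψ φinv : ℝ → ℝ) (hφc : LU β₁c β₂c φc) (hφj : LU β₁j β₂j φj)
    (hψ : LU γ₁ γ₂ ψ)
    (hcj : ∀ r : ℝ, 0 < r → r ≤ 1 → φc r ≤ φj r)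
    (hinv₁ : ∀ r : ℝ, 0 ≤ r → φinv (min (φc r) (φj r)) = r)
    (hinv₂ : ∀ t : ℝ, 0 ≤ t → min (φc (φinv t)) (φj (φinv t)) = t)
    (hint : IntegrableOn (fun t => min 1 t / (t * ψ (φinv t))) (Ioi (0 : ℝ))) :
    ∃ C : ℝ, 0 < C ∧ ∀ r : ℝ, 0 < r → r ≤ 1 →
      (∫ t in Ioi (0 : ℝ), (1 - Real.exp (-(φj r)⁻¹ * t)) / (t * ψ (φinv t))) ≤
        (∫ t in Ioc (0 : ℝ) (min (φc r) (φj r)),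
            (1 - Real.exp (-(φj r)⁻¹ * t)) / (t * ψ (φinv t))) + C / ψ r := by
  obtain ⟨hφc_cont, hφc_mono, hφc0, hφc1, Cc, hCc1, hCc⟩ := hφc
  obtain ⟨hφj_cont, hφj_mono, hφj0, hφj1, Cj, hCj1, hCj⟩ := hφj
  obtain ⟨hψ_cont, hψ_mono, hψ0, hψ1, Cψ, hCψ1, hCψ⟩ := hψ
  have hCψ0 : (0:ℝ) < Cψ := lt_of_lt_of_le one_pos hCψ1
  have hCc0 : (0:ℝ) < Cc := lt_of_lt_of_le one_pos hCc1
  have hCj0 : (0:ℝ) < Cj := lt_of_lt_of_le one_pos hCj1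
  set β₂ : ℝ := max β₂c β₂j with hβ₂def
  have hβ₂ : 0 < β₂ := lt_of_lt_of_le h1c (hc.trans (le_max_left _ _))
  set ε : ℝ := γ₁ / β₂ with hεdef
  have hε : 0 < ε := div_pos hγ₁ hβ₂
  set Cφ : ℝ := max Cc Cj with hCφdef
  have hCφ1 : 1 ≤ Cφ := le_trans hCc1 (le_max_left _ _)
  have hCφ0 : 0 < Cφ := lt_of_lt_of_le one_pos hCφ1
  -- positivity of φc, φj, ψ on (0,∞)
  have hφcpos : ∀ x : ℝ, 0 < x → 0 < φc x := by
    intro x hx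
    have := hφc_mono (mem_Ici.2 le_rfl) (mem_Ici.2 hx.le) hx
    rwa [hφc0] at this
  have hφjpos : ∀ x : ℝ, 0 < x → 0 < φj x := by
    intro x hx
    have := hφj_mono (mem_Ici.2 le_rfl) (mem_Ici.2 hx.le) hx
    rwa [hφj0] at this
  have hψpos : ∀ x : ℝ, 0 < x → 0 < ψ x := by
    intro x hx
    have := hψ_mono (mem_Ici.2 le_rfl) (mem_Ici.2 hx.le) hx
    rwa [hψ0] at this
  have hφpos : ∀ x : ℝ, 0 < x → 0 < min (φc x) (φj x) := fun x hx =>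
    lt_min (hφcpos x hx) (hφjpos x hx)
  have hφmono : StrictMonoOn (fun x => min (φc x) (φj x)) (Ici 0) := fun x hx y hy hxy =>
    lt_min (lt_of_le_of_lt (min_le_left _ _) (hφc_mono hx hy hxy))
           (lt_of_le_of_lt (min_le_right _ _) (hφj_mono hx hy hxy))
  -- surjectivity of φ := min(φc, φj) onto [0,∞)
  have hsurj : ∀ t : ℝ, 0 ≤ t → ∃ x : ℝ, 0 ≤ x ∧ min (φc x) (φj x) = t := by
    intro t ht
    rcases eq_or_lt_of_le ht with h | ht
    · exact ⟨0, le_rfl, by rw [hφc0, hφj0, min_self, ← h]⟩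
    set R : ℝ := max 1 (max ((Cc * t) ^ (1/β₁c)) ((Cj * t) ^ (1/β₁j))) with hR
    have hR1 : (1:ℝ) ≤ R := le_max_left _ _
    have hRpos : (0:ℝ) < R := lt_of_lt_of_le one_pos hR1
    have hφcR : t ≤ φc R := by
      have h1 := (hCc 1 R one_pos hR1).1
      rw [hφc1, div_one, div_one] at h1
      have h3 : (Cc * t) ^ (1/β₁c) ≤ R := le_trans (le_max_left _ _) (le_max_right _ _)
      have h4 := Real.rpow_le_rpow (Real.rpow_nonneg (by positivity) _) h3 h1c.le
      rw [← Real.rpow_mul (by positivity), one_div_mul_cancel h1c.ne', Real.rpow_one] at h4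
      nlinarith [mul_le_mul_of_nonneg_left h4 (inv_pos.2 hCc0).le, inv_mul_cancel₀ hCc0.ne']
    have hφjR : t ≤ φj R := by
      have h1 := (hCj 1 R one_pos hR1).1
      rw [hφj1, div_one, div_one] at h1
      have h3 : (Cj * t) ^ (1/β₁j) ≤ R := le_trans (le_max_right _ _) (le_max_right _ _)
      have h4 := Real.rpow_le_rpow (Real.rpow_nonneg (by positivity) _) h3 h1j.le
      rw [← Real.rpow_mul (by positivity), one_div_mul_cancel h1j.ne', Real.rpow_one] at h4
      nlinarith [mul_le_mul_of_nonneg_left h4 (inv_pos.2 hCj0).le, inv_mul_cancel₀ hCj0.ne']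
    have hcont : ContinuousOn (fun x => min (φc x) (φj x)) (Icc (0:ℝ) R) :=
      (hφc_cont.mono Icc_subset_Ici_self).inf (hφj_cont.mono Icc_subset_Ici_self)
    have hmem : t ∈ Icc (min (φc 0) (φj 0)) (min (φc R) (φj R)) := by
      rw [hφc0, hφj0, min_self]
      exact ⟨ht.le, le_min hφcR hφjR⟩
    obtain ⟨x, hx, hxt⟩ := intermediate_value_Icc hRpos.le hcont hmem
    exact ⟨x, hx.1, hxt⟩
  have hinv_nonneg : ∀ t : ℝ, 0 ≤ t → 0 ≤ φinv t := by
    intro t ht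
    obtain ⟨x, hx, hxt⟩ := hsurj t ht
    rw [← hxt, hinv₁ x hx]
    exact hx
  have hinv_mono : ∀ s t : ℝ, 0 ≤ s → s ≤ t → φinv s ≤ φinv t := by
    intro s t hs hst
    by_contra h
    push_neg at h
    have := hφmono (mem_Ici.2 (hinv_nonneg t (hs.trans hst))) (mem_Ici.2 (hinv_nonneg s hs)) h
    dsimp only at this
    rw [hinv₂ s hs, hinv₂ t (hs.trans hst)] at this
    linarith
  have hinv_pos : ∀ t : ℝ, 0 < t → 0 < φinv t := by
    intro t ht
    rcases (hinv_nonneg t ht.le).lt_or_eq with h | h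
    · exact h
    · exfalso
      have h2 := hinv₂ t ht.le
      rw [← h, hφc0, hφj0, min_self] at h2
      linarith
  -- doubling for φ = min(φc, φj)
  have hφdoub : ∀ x R : ℝ, 0 < x → x ≤ R →
      min (φc R) (φj R) ≤ Cφ * (R / x) ^ β₂ * min (φc x) (φj x) := by
    intro x R hx hxR
    have hR1 : (1:ℝ) ≤ R / x := (one_le_div hx).2 hxR
    have hrp : (0:ℝ) ≤ (R/x) ^ β₂ := Real.rpow_nonneg (by positivity) _
    rcases le_total (φc x) (φj x) with hle | hle
    · rw [min_eq_left hle]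
      have h1 := (hCc x R hx hxR).2
      rw [div_le_iff₀ (hφcpos x hx)] at h1
      calc min (φc R) (φj R) ≤ φc R := min_le_left _ _
        _ ≤ Cc * (R/x) ^ β₂c * φc x := h1
        _ ≤ Cφ * (R/x) ^ β₂ * φc x := by
            have h2 : (R/x) ^ β₂c ≤ (R/x) ^ β₂ :=
              Real.rpow_le_rpow_of_exponent_le hR1 (le_max_left _ _)
            have h3 : Cc ≤ Cφ := le_max_left _ _
            exact mul_le_mul_of_nonneg_right
              (mul_le_mul h3 h2 (Real.rpow_nonneg (by positivity) _) hCφ0.le) (hφcpos x hx).le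
    · rw [min_eq_right hle]
      have h1 := (hCj x R hx hxR).2
      rw [div_le_iff₀ (hφjpos x hx)] at h1
      calc min (φc R) (φj R) ≤ φj R := min_le_right _ _
        _ ≤ Cj * (R/x) ^ β₂j * φj x := h1
        _ ≤ Cφ * (R/x) ^ β₂ * φj x := by
            have h2 : (R/x) ^ β₂j ≤ (R/x) ^ β₂ :=
              Real.rpow_le_rpow_of_exponent_le hR1 (le_max_right _ _)
            have h3 : Cj ≤ Cφ := le_max_right _ _
            exact mul_le_mul_of_nonneg_right
              (mul_le_mul h3 h2 (Real.rpow_nonneg (by positivity) _) hCφ0.le) (hφjpos x hx).le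
  refine ⟨Cψ * Cφ ^ ε / ε, by positivity, ?_⟩
  intro r hr hr1
  set a : ℝ := min (φc r) (φj r) with hadef
  have ha : 0 < a := hφpos r hr
  have hφjr : 0 < φj r := hφjpos r hr
  set lam : ℝ := (φj r)⁻¹ with hlamdef
  have hlam0 : 0 < lam := inv_pos.2 hφjr
  have hψr : 0 < ψ r := hψpos r hr
  -- measurability
  have hmeas : AEStronglyMeasurable (fun t => (1 - Real.exp (-lam * t)) / (t * ψ (φinv t)))
      (volume.restrict (Ioi (0:ℝ))) := by
    have hH : Monotone (fun t : ℝ => ψ (φinv (max 0 t))) := by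
      intro s t hst
      have h1 : (0:ℝ) ≤ max 0 s := le_max_left _ _
      have h2 := hinv_mono (max 0 s) (max 0 t) h1 (max_le_max le_rfl hst)
      exact (hψ_mono.monotoneOn) (mem_Ici.2 (hinv_nonneg _ h1))
        (mem_Ici.2 (hinv_nonneg _ (le_max_left _ _))) h2
    have hG : Measurable (fun t : ℝ => (1 - Real.exp (-lam * t)) / (t * ψ (φinv (max 0 t)))) := by
      apply Measurable.div
      · exact (measurable_const.sub (Real.measurable_exp.comp (measurable_id.const_mul (-lam))))
      · exact measurable_id.mul hH.measurable
    refine hG.aestronglyMeasurable.congr ?_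
    filter_upwards [ae_restrict_mem measurableSet_Ioi] with t ht
    rw [max_eq_right (le_of_lt ht)]
  -- integrability
  set M : ℝ := max 1 lam with hMdef
  have hM1 : (1:ℝ) ≤ M := le_max_left _ _
  have hFint : IntegrableOn (fun t => (1 - Real.exp (-lam * t)) / (t * ψ (φinv t))) (Ioi (0:ℝ)) := by
    refine Integrable.mono' (hint.const_mul M) hmeas ?_
    filter_upwards [ae_restrict_mem measurableSet_Ioi] with t ht
    have ht0 : (0:ℝ) < t := ht
    have hden : 0 < t * ψ (φinv t) := mul_pos ht0 (hψpos _ (hinv_pos t ht0))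
    have h1 : 0 ≤ 1 - Real.exp (-lam * t) := by
      have : Real.exp (-lam * t) ≤ 1 := Real.exp_le_one_iff.2 (by nlinarith)
      linarith
    have h2 : 1 - Real.exp (-lam * t) ≤ min 1 (lam * t) := by
      refine le_min (by nlinarith [Real.exp_pos (-lam*t)]) ?_
      have h := Real.add_one_le_exp (-(lam*t))
      rw [show -(lam*t) = -lam*t by ring] at h
      linarith
    have h3 : min 1 (lam * t) ≤ M * min 1 t := by
      rcases le_total t 1 with h | h
      · rw [min_eq_right h]
        calc min 1 (lam*t) ≤ lam * t := min_le_right _ _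
          _ ≤ M * t := by nlinarith [le_max_right (1:ℝ) lam]
      · rw [min_eq_left h, mul_one]
        calc min 1 (lam*t) ≤ 1 := min_le_left _ _
          _ ≤ M := hM1
    rw [Real.norm_eq_abs, abs_of_nonneg (div_nonneg h1 hden.le), mul_div_assoc']
    exact (div_le_div_iff_of_pos_right hden).2 (h2.trans h3)
  -- split the integral
  have hsub1 : Ioc (0:ℝ) a ⊆ Ioi 0 := Ioc_subset_Ioi_self
  have hsub2 : Ioi a ⊆ Ioi (0:ℝ) := Ioi_subset_Ioi ha.le
  have hsplit : (∫ t in Ioi (0:ℝ), (1 - Real.exp (-lam * t)) / (t * ψ (φinv t)))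
      = (∫ t in Ioc (0:ℝ) a, (1 - Real.exp (-lam * t)) / (t * ψ (φinv t)))
        + (∫ t in Ioi a, (1 - Real.exp (-lam * t)) / (t * ψ (φinv t))) := by
    rw [← Ioc_union_Ioi_eq_Ioi ha.le]
    exact setIntegral_union (Ioc_disjoint_Ioi le_rfl) measurableSet_Ioi
      (hFint.mono_set hsub1) (hFint.mono_set hsub2)
  -- tail estimate
  have hra : φinv a = r := hinv₁ r hr.le
  have hCane : (0:ℝ) < (Cφ * a) ^ ε := Real.rpow_pos_of_pos (by positivity) _
  set K : ℝ := Cψ * (Cφ * a) ^ ε / ψ r with hKdef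
  have hK0 : 0 < K := by positivity
  have hbound : ∀ t ∈ Ioi a, (1 - Real.exp (-lam * t)) / (t * ψ (φinv t)) ≤ K * t ^ (-1 - ε) := by
    intro t ht
    have hta : a < t := ht
    have ht0 : 0 < t := ha.trans hta
    have hrx : r ≤ φinv t := by rw [← hra]; exact hinv_mono a t ha.le hta.le
    have hx0 : 0 < φinv t := lt_of_lt_of_le hr hrx
    have hψx0 : 0 < ψ (φinv t) := hψpos _ hx0
    have h1 := (hCψ r (φinv t) hr hrx).1
    have h2 : t ≤ Cφ * (φinv t / r) ^ β₂ * a := by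
      have h := hφdoub r (φinv t) hr hrx
      rw [hinv₂ t ht0.le] at h
      exact h
    have h3 : (t / (Cφ * a)) ^ ε ≤ (φinv t / r) ^ γ₁ := by
      have hq : t / (Cφ * a) ≤ (φinv t / r) ^ β₂ := by
        rw [div_le_iff₀ (by positivity)]
        nlinarith
      calc (t / (Cφ * a)) ^ ε ≤ ((φinv t / r) ^ β₂) ^ ε :=
            Real.rpow_le_rpow (by positivity) hq hε.le
        _ = (φinv t / r) ^ (β₂ * ε) := by rw [← Real.rpow_mul (by positivity)]
        _ = (φinv t / r) ^ γ₁ := by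
            rw [hεdef, mul_comm β₂, div_mul_cancel₀ _ hβ₂.ne']
    have h5 : Cψ⁻¹ * (t / (Cφ * a)) ^ ε * ψ r ≤ ψ (φinv t) := by
      have h4 := (le_div_iff₀ hψr).1 h1
      have h6 : Cψ⁻¹ * (t/(Cφ*a))^ε ≤ Cψ⁻¹ * (φinv t/r)^γ₁ :=
        mul_le_mul_of_nonneg_left h3 (inv_pos.2 hCψ0).le
      exact le_trans (mul_le_mul_of_nonneg_right h6 hψr.le) h4
    have key : K * (t * (Cψ⁻¹ * (t / (Cφ * a)) ^ ε * ψ r)) = t ^ ((1:ℝ) + ε) := by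
      rw [hKdef, Real.div_rpow ht0.le (by positivity), Real.rpow_add ht0, Real.rpow_one]
      field_simp
    calc (1 - Real.exp (-lam * t)) / (t * ψ (φinv t)) ≤ 1 / (t * ψ (φinv t)) := by
          refine (div_le_div_iff_of_pos_right (mul_pos ht0 hψx0)).2 ?_
          nlinarith [Real.exp_pos (-lam*t)]
      _ ≤ K * t ^ (-1 - ε) := by
          rw [show (-1 - ε : ℝ) = -(1 + ε) by ring, Real.rpow_neg ht0.le, ← div_eq_mul_inv,
            div_le_div_iff₀ (mul_pos ht0 hψx0) (Real.rpow_pos_of_pos ht0 _), one_mul]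
          calc t ^ ((1:ℝ)+ε) = K * (t * (Cψ⁻¹ * (t/(Cφ*a))^ε * ψ r)) := key.symm
            _ ≤ K * (t * ψ (φinv t)) :=
                mul_le_mul_of_nonneg_left (mul_le_mul_of_nonneg_left h5 ht0.le) hK0.le
  have hIrpow : IntegrableOn (fun t : ℝ => K * t ^ (-1 - ε)) (Ioi a) :=
    (integrableOn_Ioi_rpow_of_lt (by linarith) ha).const_mul K
  have htail : (∫ t in Ioi a, (1 - Real.exp (-lam * t)) / (t * ψ (φinv t)))
      ≤ Cψ * Cφ ^ ε / ε / ψ r := by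
    have hmono := setIntegral_mono_on (hFint.mono_set hsub2) hIrpow measurableSet_Ioi hbound
    have hval : (∫ t in Ioi a, K * t ^ (-1 - ε)) = K * (a ^ (-ε) / ε) := by
      rw [integral_const_mul, integral_Ioi_rpow_of_lt (by linarith) ha]
      congr 1
      rw [show (-1 - ε) + 1 = -ε by ring, neg_div_neg_eq]
    have h1 : a ^ ε * a ^ (-ε) = 1 := by
      rw [← Real.rpow_add ha]; simp
    calc (∫ t in Ioi a, (1 - Real.exp (-lam * t)) / (t * ψ (φinv t)))
        ≤ K * (a ^ (-ε) / ε) := by rw [← hval]; exact hmono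
      _ = Cψ * Cφ ^ ε / ε / ψ r * (a ^ ε * a ^ (-ε)) := by
          rw [hKdef, Real.mul_rpow hCφ0.le ha.le]; ring
      _ = Cψ * Cφ ^ ε / ε / ψ r := by rw [h1, mul_one]
  rw [hsplit]
  exact add_le_add_right htail _
end

section
/- Let ψ satisfy LU(γ₁,γ₂) and φ satisfy LU(β₁,β₂). Then there is C > 0 such that for all r > 0, ∫_{φ(r)}^∞ (1/(t ψ(φ⁻¹(t)))) dt ≤ C/ψ(r). -/
open Real Set MeasureTheory

theorem stmt_12 (β₁ β₂ γ₁ γ₂ : ℝ) (hβ₁ : 0 < β₁) (hβ : β₁ ≤ β₂)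
    (hγ₁ : 0 < γ₁) (hγ : γ₁ ≤ γ₂)
    (φ ψ φinv : ℝ → ℝ) (hφ : LU β₁ β₂ φ) (hψ : LU γ₁ γ₂ ψ)
    (hinv₁ : ∀ r : ℝ, 0 ≤ r → φinv (φ r) = r)
    (hinv₂ : ∀ t : ℝ, 0 ≤ t → φ (φinv t) = t) :
    ∃ C : ℝ, 0 < C ∧ ∀ r : ℝ, 0 < r →
      (∫ t in Ioi (φ r), 1 / (t * ψ (φinv t))) ≤ C / ψ r := by
  obtain ⟨hφc, hφm, hφ0, hφ1, Cφ, hCφ1, hCφ⟩ := hφ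
  obtain ⟨hψc, hψm, hψ0, hψ1, Cψ, hCψ1, hCψ⟩ := hψ
  have hCφ0 : 0 < Cφ := lt_of_lt_of_le one_pos hCφ1
  have hCψ0 : 0 < Cψ := lt_of_lt_of_le one_pos hCψ1
  have hβ₂ : 0 < β₂ := hβ₁.trans_le hβ
  set a : ℝ := γ₁ / β₂ with ha_def
  have ha : 0 < a := div_pos hγ₁ hβ₂
  set K : ℝ := Cψ * Cφ ^ a with hK_def
  have hK : 0 < K := mul_pos hCψ0 (Real.rpow_pos_of_pos hCφ0 a)
  -- positivity of ψ, φ on positives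
  have hψpos : ∀ x : ℝ, 0 < x → 0 < ψ x := fun x hx => by
    have := hψm (Set.mem_Ici.mpr le_rfl) (Set.mem_Ici.mpr hx.le) hx
    rwa [hψ0] at this
  have hφpos : ∀ x : ℝ, 0 < x → 0 < φ x := fun x hx => by
    have := hφm (Set.mem_Ici.mpr le_rfl) (Set.mem_Ici.mpr hx.le) hx
    rwa [hφ0] at this
  -- surjectivity of φ onto [0, ∞)
  have hsurj : ∀ t : ℝ, 0 ≤ t → ∃ s : ℝ, 0 ≤ s ∧ φ s = t := by
    intro t ht
    set R : ℝ := max 1 ((Cφ * t) ^ (1 / β₁)) with hR_def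
    have hR1 : (1 : ℝ) ≤ R := le_max_left _ _
    have hR0 : (0 : ℝ) ≤ R := zero_le_one.trans hR1
    have hφR : t ≤ φ R := by
      have h1 := (hCφ 1 R one_pos hR1).1
      rw [hφ1, div_one, div_one] at h1
      have h2 : (Cφ * t) ^ (1 / β₁) ≤ R := le_max_right _ _
      have h3 : Cφ * t ≤ R ^ β₁ := by
        calc Cφ * t = ((Cφ * t) ^ (1 / β₁)) ^ β₁ := by
              rw [← Real.rpow_mul (by positivity), one_div,
                inv_mul_cancel₀ hβ₁.ne', Real.rpow_one]
          _ ≤ R ^ β₁ := Real.rpow_le_rpow (by positivity) h2 hβ₁.le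
      calc t = Cφ⁻¹ * (Cφ * t) := by field_simp
        _ ≤ Cφ⁻¹ * R ^ β₁ := by
            exact mul_le_mul_of_nonneg_left h3 (by positivity)
        _ ≤ φ R := h1
    have hcont : ContinuousOn φ (Icc 0 R) := hφc.mono Icc_subset_Ici_self
    have := intermediate_value_Icc hR0 hcont
    have htmem : t ∈ Icc (φ 0) (φ R) := by
      rw [hφ0]; exact ⟨ht, hφR⟩
    obtain ⟨s, hs, hφs⟩ := this htmem
    exact ⟨s, hs.1, hφs⟩
  refine ⟨K / a, div_pos hK ha, ?_⟩
  intro r hr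
  have hψr : 0 < ψ r := hψpos r hr
  have hb : 0 < φ r := hφpos r hr
  -- pointwise bound
  have key : ∀ t ∈ Ioi (φ r),
      0 ≤ 1 / (t * ψ (φinv t)) ∧
      1 / (t * ψ (φinv t)) ≤ K / ψ r * (φ r) ^ a * t ^ (-1 - a) := by
    intro t ht
    have ht0 : 0 < t := hb.trans ht
    obtain ⟨s, hs0, hst⟩ := hsurj t ht0.le
    have hinv : φinv t = s := by rw [← hst, hinv₁ s hs0]
    have hsr : r ≤ s := by
      by_contra hc
      push_neg at hc
      have := hφm (Set.mem_Ici.mpr hs0) (Set.mem_Ici.mpr hr.le) hc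
      rw [hst] at this
      exact absurd ht (not_lt.mpr this.le)
    have hs1 : 0 < s := hr.trans_le hsr
    have hψs : 0 < ψ s := hψpos s hs1
    -- lower bound for ψ s
    have h1 := (hCψ r s hr hsr).1
    have h2 := (hCφ r s hr hsr).2
    rw [hst] at h2
    have hsrpos : 0 < s / r := div_pos hs1 hr
    have h3 : t / φ r / Cφ ≤ (s / r) ^ β₂ := by
      rw [div_le_iff₀ hCφ0]
      linarith
    have h4 : (t / φ r / Cφ) ^ a ≤ (s / r) ^ γ₁ := by
      have : ((s / r) ^ β₂) ^ a = (s / r) ^ γ₁ := by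
        rw [← Real.rpow_mul hsrpos.le]
        congr 1
        rw [ha_def]
        field_simp
      rw [← this]
      exact Real.rpow_le_rpow (by positivity) h3 ha.le
    have h5 : ψ r * (t / φ r) ^ a / K ≤ ψ s := by
      have h6 : (t / φ r / Cφ) ^ a = (t / φ r) ^ a / Cφ ^ a :=
        Real.div_rpow (by positivity) hCφ0.le a
      have h7 : Cψ⁻¹ * (t / φ r / Cφ) ^ a ≤ ψ s / ψ r :=
        le_trans (mul_le_mul_of_nonneg_left h4 (by positivity)) h1
      rw [le_div_iff₀ hψr] at h7
      rw [h6] at h7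
      rw [div_le_iff₀ hK, hK_def]
      have hP : (0:ℝ) < Cφ ^ a := Real.rpow_pos_of_pos hCφ0 a
      calc ψ r * (t / φ r) ^ a
          = Cψ * Cφ ^ a * (Cψ⁻¹ * ((t / φ r) ^ a / Cφ ^ a) * ψ r) := by
            field_simp
        _ ≤ Cψ * Cφ ^ a * ψ s := mul_le_mul_of_nonneg_left h7 (by positivity)
        _ = ψ s * (Cψ * Cφ ^ a) := mul_comm _ _
    have hL : 0 < ψ r * (t / φ r) ^ a / K := by positivity
    constructor
    · rw [hinv]; positivity
    · rw [hinv]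
      have h8 : 1 / (t * ψ s) ≤ 1 / (t * (ψ r * (t / φ r) ^ a / K)) := by
        apply one_div_le_one_div_of_le (by positivity)
        exact mul_le_mul_of_nonneg_left h5 ht0.le
      refine h8.trans (le_of_eq ?_)
      rw [Real.div_rpow ht0.le hb.le, show (-1 - a : ℝ) = -(1 + a) by ring,
        Real.rpow_neg ht0.le, Real.rpow_add ht0, Real.rpow_one]
      have hta : (0:ℝ) < t ^ a := Real.rpow_pos_of_pos ht0 a
      have hba : (0:ℝ) < (φ r) ^ a := Real.rpow_pos_of_pos hb a
      field_simp
  -- integrability of the dominating function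
  have hlt : (-1 - a : ℝ) < -1 := by linarith
  have hgint : IntegrableOn (fun t : ℝ => K / ψ r * (φ r) ^ a * t ^ (-1 - a))
      (Ioi (φ r)) := (integrableOn_Ioi_rpow_of_lt hlt hb).const_mul _
  have hmono : (∫ t in Ioi (φ r), 1 / (t * ψ (φinv t))) ≤
      ∫ t in Ioi (φ r), K / ψ r * (φ r) ^ a * t ^ (-1 - a) := by
    apply integral_mono_of_nonneg
    · exact (ae_restrict_mem measurableSet_Ioi).mono fun t ht => (key t ht).1
    · exact hgint
    · exact (ae_restrict_mem measurableSet_Ioi).mono fun t ht => (key t ht).2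
  refine hmono.trans ?_
  rw [MeasureTheory.integral_const_mul, integral_Ioi_rpow_of_lt hlt hb]
  have : (-1 - a + 1 : ℝ) = -a := by ring
  rw [this, Real.rpow_neg hb.le]
  have hba : (0:ℝ) < (φ r) ^ a := Real.rpow_pos_of_pos hb a
  apply le_of_eq
  have h1 : ψ r ≠ 0 := hψr.ne'
  have h2 : a ≠ 0 := ha.ne'
  have h3 : (φ r : ℝ) ^ a ≠ 0 := hba.ne'
  field_simp
end

section
/- Let β ≥ 2, γ₁ ∈ (0,1), γ₂ ∈ (1,∞), and set φ(r) := r^β and ψ(r) := r^{γ₁β} ∨ r^{γ₂β}. Define φ̄(λ) := ∫₀^∞ (1 - e^{-λt})/(t ψ(φ⁻¹(t))) dt. Then φ̄(φ(r)⁻¹) ≃ r^{-γ₁β} ∧ r^{-β} and 1/ψ(r) ≃ r^{-γ₁β} ∧ r^{-γ₂β} (comparable up to multiplicative constants uniform in r > 0), and consequently φ̄(φ(r)⁻¹) and 1/ψ(r) are not comparable on (0,∞) when γ₂ > 1. -/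
open Real Set MeasureTheory

lemma aux_exp_le (x : ℝ) : 1 - Real.exp (-x) ≤ x := by
  nlinarith [Real.add_one_le_exp (-x)]

lemma aux_exp_ge {x : ℝ} (hx : 0 ≤ x) : x / (1 + x) ≤ 1 - Real.exp (-x) := by
  have h1 : (0:ℝ) < 1 + x := by linarith
  have h2 : Real.exp (-x) ≤ (1 + x)⁻¹ := by
    rw [Real.exp_neg]
    have := Real.add_one_le_exp x
    gcongr
    linarith
  have h3 : x / (1 + x) = 1 - (1 + x)⁻¹ := by field_simp; ring
  rw [h3]; linarith

set_option maxHeartbeats 1000000 in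
lemma key (γ₁ γ₂ : ℝ) (h1 : 0 < γ₁) (h2 : γ₁ < 1) (h3 : 1 < γ₂) :
    ∃ C : ℝ, 1 ≤ C ∧ ∀ lam : ℝ, 0 < lam →
      C⁻¹ * min (lam ^ γ₁) lam ≤
        (∫ t in Ioi (0:ℝ), (1 - Real.exp (-lam * t)) / (t * max (t ^ γ₁) (t ^ γ₂))) ∧
      (∫ t in Ioi (0:ℝ), (1 - Real.exp (-lam * t)) / (t * max (t ^ γ₁) (t ^ γ₂))) ≤
        C * min (lam ^ γ₁) lam := by
  have h2γ : (0:ℝ) < 2 ^ γ₂ := Real.rpow_pos_of_pos two_pos γ₂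
  set c : ℝ := min (3 * 2 ^ γ₂)⁻¹ 8⁻¹ with hc
  have hc0 : 0 < c := lt_min (by positivity) (by norm_num)
  set Cu : ℝ := (1 - γ₁)⁻¹ + (γ₂ - 1)⁻¹ + γ₁⁻¹ + 1 with hCu
  have hCu0 : 0 < Cu := by
    have a1 : (0:ℝ) < (1 - γ₁)⁻¹ := inv_pos.2 (by linarith)
    have a2 : (0:ℝ) < (γ₂ - 1)⁻¹ := inv_pos.2 (by linarith)
    have a3 : (0:ℝ) < γ₁⁻¹ := inv_pos.2 h1
    rw [hCu]; linarith
  refine ⟨max (max Cu c⁻¹) 1, le_max_right _ _, fun lam hl => ?_⟩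
  set C : ℝ := max (max Cu c⁻¹) 1 with hCdef
  have hC0 : 0 < C := lt_of_lt_of_le one_pos (le_max_right _ _)
  set f : ℝ → ℝ := fun t => (1 - Real.exp (-lam * t)) / (t * max (t ^ γ₁) (t ^ γ₂)) with hf
  have hg12 : γ₁ ≤ γ₂ := by linarith
  have hmax_lo : ∀ t : ℝ, 0 < t → t ≤ 1 → max (t ^ γ₁) (t ^ γ₂) = t ^ γ₁ :=
    fun t ht0 ht1 => max_eq_left (Real.rpow_le_rpow_of_exponent_ge ht0 ht1 hg12)
  have hmax_hi : ∀ t : ℝ, 1 ≤ t → max (t ^ γ₁) (t ^ γ₂) = t ^ γ₂ :=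
    fun t ht => max_eq_right (Real.rpow_le_rpow_of_exponent_le ht hg12)
  have hden : ∀ t : ℝ, 0 < t → 0 < t * max (t ^ γ₁) (t ^ γ₂) :=
    fun t ht => mul_pos ht (lt_max_of_lt_left (Real.rpow_pos_of_pos ht γ₁))
  have hnum0 : ∀ t : ℝ, 0 < t → 0 ≤ 1 - Real.exp (-lam * t) := by
    intro t ht
    have := aux_exp_ge (mul_nonneg hl.le ht.le)
    have h4 : 0 ≤ lam * t / (1 + lam * t) := by positivity
    rw [neg_mul]; linarith
  have hnum1 : ∀ t : ℝ, 1 - Real.exp (-lam * t) ≤ lam * t := by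
    intro t; rw [neg_mul]; exact aux_exp_le _
  have hnum2 : ∀ t : ℝ, 1 - Real.exp (-lam * t) ≤ 1 := by
    intro t; have := Real.exp_pos (-lam * t); linarith
  have hf0 : ∀ t : ℝ, 0 < t → 0 ≤ f t :=
    fun t ht => div_nonneg (hnum0 t ht) (hden t ht).le
  have hpowinv : ∀ t : ℝ, 0 < t → ∀ a : ℝ, (t * t ^ a)⁻¹ = t ^ (-1 - a) := by
    intro t ht a
    rw [show (-1 - a : ℝ) = (-1) + (-a) by ring, Real.rpow_add ht, Real.rpow_neg_one,
      Real.rpow_neg ht.le, mul_inv]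
  -- pointwise upper bounds
  have hfub1 : ∀ t ∈ Ioc (0:ℝ) 1, f t ≤ lam * t ^ (-γ₁) := by
    rintro t ⟨ht0, ht1⟩
    have e : f t = (1 - Real.exp (-lam * t)) / (t * t ^ γ₁) := by
      rw [hf]; simp only; rw [hmax_lo t ht0 ht1]
    have hd : 0 < t * t ^ γ₁ := mul_pos ht0 (Real.rpow_pos_of_pos ht0 γ₁)
    have e2 : (lam * t) / (t * t ^ γ₁) = lam * t ^ (-γ₁) := by
      rw [Real.rpow_neg ht0.le]
      field_simp
    rw [e, ← e2]
    gcongr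
    exact hnum1 t
  have hfub4 : ∀ t ∈ Ioc (0:ℝ) 1, f t ≤ t ^ (-1 - γ₁) := by
    rintro t ⟨ht0, ht1⟩
    have e : f t = (1 - Real.exp (-lam * t)) / (t * t ^ γ₁) := by
      rw [hf]; simp only; rw [hmax_lo t ht0 ht1]
    have hd : 0 < t * t ^ γ₁ := mul_pos ht0 (Real.rpow_pos_of_pos ht0 γ₁)
    rw [e, ← hpowinv t ht0 γ₁, ← one_div]
    gcongr
    exact hnum2 t
  have hfub2 : ∀ t ∈ Ioi (1:ℝ), f t ≤ lam * t ^ (-γ₂) := by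
    intro t ht
    have ht1 : (1:ℝ) ≤ t := le_of_lt ht
    have ht0 : (0:ℝ) < t := lt_of_lt_of_le one_pos ht1
    have e : f t = (1 - Real.exp (-lam * t)) / (t * t ^ γ₂) := by
      rw [hf]; simp only; rw [hmax_hi t ht1]
    have hd : 0 < t * t ^ γ₂ := mul_pos ht0 (Real.rpow_pos_of_pos ht0 γ₂)
    have e2 : (lam * t) / (t * t ^ γ₂) = lam * t ^ (-γ₂) := by
      rw [Real.rpow_neg ht0.le]
      field_simp
    rw [e, ← e2]
    gcongr
    exact hnum1 t
  have hfub3 : ∀ t ∈ Ioi (1:ℝ), f t ≤ t ^ (-1 - γ₂) := by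
    intro t ht
    have ht1 : (1:ℝ) ≤ t := le_of_lt ht
    have ht0 : (0:ℝ) < t := lt_of_lt_of_le one_pos ht1
    have e : f t = (1 - Real.exp (-lam * t)) / (t * t ^ γ₂) := by
      rw [hf]; simp only; rw [hmax_hi t ht1]
    have hd : 0 < t * t ^ γ₂ := mul_pos ht0 (Real.rpow_pos_of_pos ht0 γ₂)
    rw [e, ← hpowinv t ht0 γ₂, ← one_div]
    gcongr
    exact hnum2 t
  -- continuity and integrability
  have hcont : ContinuousOn f (Ioi (0:ℝ)) := by
    apply ContinuousOn.div
    · fun_prop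
    · apply ContinuousOn.mul continuousOn_id
      have ha : ContinuousOn (fun t : ℝ => t ^ γ₁) (Ioi 0) :=
        continuousOn_id.rpow_const fun x hx => Or.inl (ne_of_gt hx)
      have hb : ContinuousOn (fun t : ℝ => t ^ γ₂) (Ioi 0) :=
        continuousOn_id.rpow_const fun x hx => Or.inl (ne_of_gt hx)
      exact fun x hx => Filter.Tendsto.max (ha x hx) (hb x hx)
    · exact fun t ht => (hden t ht).ne'
  have hmeas : ∀ s : Set ℝ, MeasurableSet s → s ⊆ Ioi (0:ℝ) →
      AEStronglyMeasurable f (volume.restrict s) :=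
    fun s hs hsub => (hcont.mono hsub).aestronglyMeasurable hs
  have hmaj1 : IntegrableOn (fun t : ℝ => lam * t ^ (-γ₁)) (Ioc (0:ℝ) 1) :=
    ((intervalIntegral.intervalIntegrable_rpow' (by linarith : (-1:ℝ) < -γ₁)).1).const_mul lam
  have hint1 : IntegrableOn f (Ioc (0:ℝ) 1) := by
    apply Integrable.mono' hmaj1 (hmeas _ measurableSet_Ioc Ioc_subset_Ioi_self)
    refine (ae_restrict_iff' measurableSet_Ioc).2 (ae_of_all _ fun t ht => ?_)
    rw [Real.norm_eq_abs, abs_of_nonneg (hf0 t ht.1)]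
    exact hfub1 t ht
  have hmaj2 : IntegrableOn (fun t : ℝ => t ^ (-1 - γ₂)) (Ioi (1:ℝ)) :=
    integrableOn_Ioi_rpow_of_lt (by linarith) one_pos
  have hint2 : IntegrableOn f (Ioi (1:ℝ)) := by
    apply Integrable.mono' hmaj2 (hmeas _ measurableSet_Ioi (Ioi_subset_Ioi zero_le_one))
    refine (ae_restrict_iff' measurableSet_Ioi).2 (ae_of_all _ fun t ht => ?_)
    rw [Real.norm_eq_abs, abs_of_nonneg (hf0 t (lt_trans one_pos ht))]
    exact hfub3 t ht
  have hint : IntegrableOn f (Ioi (0:ℝ)) := by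
    rw [← Ioc_union_Ioi_eq_Ioi (zero_le_one (α := ℝ))]
    exact hint1.union hint2
  have hsplit : (∫ t in Ioi (0:ℝ), f t) = (∫ t in Ioc (0:ℝ) 1, f t) + ∫ t in Ioi (1:ℝ), f t := by
    rw [← Ioc_union_Ioi_eq_Ioi (zero_le_one (α := ℝ))]
    exact setIntegral_union (Ioc_disjoint_Ioi le_rfl) measurableSet_Ioi hint1 hint2
  -- reference integrals
  have hJ1 : (∫ t in Ioc (0:ℝ) 1, t ^ (-γ₁)) = (1 - γ₁)⁻¹ := by
    rw [← intervalIntegral.integral_of_le (zero_le_one (α := ℝ)),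
      integral_rpow (Or.inl (by linarith : (-1:ℝ) < -γ₁)),
      Real.one_rpow, Real.zero_rpow (by intro h; linarith)]
    rw [show (-γ₁ + 1 : ℝ) = 1 - γ₁ by ring, sub_zero, one_div]
    
  have hJ2 : (∫ t in Ioi (1:ℝ), t ^ (-γ₂)) = (γ₂ - 1)⁻¹ := by
    rw [integral_Ioi_rpow_of_lt (by linarith : (-γ₂:ℝ) < -1) one_pos, Real.one_rpow,
      show (-γ₂ + 1 : ℝ) = -(γ₂ - 1) by ring, div_neg, neg_div, neg_neg, one_div]
  have hJ3 : (∫ t in Ioi (1:ℝ), t ^ (-1 - γ₂)) = γ₂⁻¹ := by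
    rw [integral_Ioi_rpow_of_lt (by linarith : (-1 - γ₂:ℝ) < -1) one_pos, Real.one_rpow,
      show (-1 - γ₂ + 1 : ℝ) = -γ₂ by ring, div_neg, neg_div, neg_neg, one_div]
  have hCinv_le_c : C⁻¹ ≤ c := by
    have hcC : c⁻¹ ≤ C := le_trans (le_max_right Cu c⁻¹) (le_max_left _ 1)
    have := inv_anti₀ (inv_pos.2 hc0) hcC
    rwa [inv_inv] at this
  have hCu_le_C : Cu ≤ C := le_trans (le_max_left Cu c⁻¹) (le_max_left _ 1)
  rcases le_or_gt lam 1 with hlam | hlam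
  · -- small lam
    have hm : min (lam ^ γ₁) lam = lam := min_eq_right (by
      calc lam = lam ^ (1:ℝ) := (Real.rpow_one lam).symm
        _ ≤ lam ^ γ₁ := Real.rpow_le_rpow_of_exponent_ge hl hlam h2.le)
    rw [hm]
    constructor
    · -- lower bound
      have hsub : Ioc (1:ℝ) 2 ⊆ Ioi (0:ℝ) := fun t ht => lt_trans one_pos ht.1
      have hconstlb : ∀ t ∈ Ioc (1:ℝ) 2, lam * (3 * 2 ^ γ₂)⁻¹ ≤ f t := by
        rintro t ⟨ht1, ht2⟩
        have ht0 : (0:ℝ) < t := lt_trans one_pos ht1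
        have e : f t = (1 - Real.exp (-lam * t)) / (t * t ^ γ₂) := by
          rw [hf]; simp only; rw [hmax_hi t ht1.le]
        have hd : 0 < t * t ^ γ₂ := mul_pos ht0 (Real.rpow_pos_of_pos ht0 γ₂)
        rw [e, le_div_iff₀ hd]
        have hb1 : t ^ γ₂ ≤ 2 ^ γ₂ := Real.rpow_le_rpow ht0.le ht2 (by linarith)
        have heq : lam * (3 * 2 ^ γ₂)⁻¹ * (t * 2 ^ γ₂) = lam * t / 3 := by
          field_simp
        have hstep : lam * (3 * 2 ^ γ₂)⁻¹ * (t * t ^ γ₂) ≤ lam * t / 3 := by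
          rw [← heq]; gcongr
        have hlt : 1 + lam * t ≤ 3 := by nlinarith
        have hx0 : 0 ≤ lam * t := by positivity
        have hstep2 : lam * t / 3 ≤ lam * t / (1 + lam * t) :=
          div_le_div_of_nonneg_left hx0 (by linarith) hlt
        have hexp := aux_exp_ge hx0
        rw [neg_mul]
        linarith
      have hμ : volume (Ioc (1:ℝ) 2) ≠ ⊤ := measure_Ioc_lt_top.ne
      have hgc := setIntegral_ge_of_const_le measurableSet_Ioc hμ hconstlb (hint.mono_set hsub)
      have hvol : (volume (Ioc (1:ℝ) 2)).toReal = 1 := by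
        rw [Real.volume_Ioc]; norm_num
      rw [measureReal_def, hvol, smul_eq_mul, one_mul] at hgc
      have hmono := setIntegral_mono_set hint
        ((ae_restrict_iff' measurableSet_Ioi).2 (ae_of_all _ fun t ht => hf0 t ht))
        (HasSubset.Subset.eventuallyLE hsub)
      have hcc : c ≤ (3 * 2 ^ γ₂)⁻¹ := min_le_left _ _
      have h5 : C⁻¹ * lam ≤ lam * (3 * 2 ^ γ₂)⁻¹ := by
        have : C⁻¹ ≤ (3 * 2 ^ γ₂)⁻¹ := le_trans hCinv_le_c hcc
        nlinarith
      calc C⁻¹ * lam ≤ lam * (3 * 2 ^ γ₂)⁻¹ := h5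
        _ ≤ ∫ t in Ioc (1:ℝ) 2, f t := hgc
        _ ≤ ∫ t in Ioi (0:ℝ), f t := hmono
    · -- upper bound
      have hA : (∫ t in Ioc (0:ℝ) 1, f t) ≤ lam * (1 - γ₁)⁻¹ := by
        calc (∫ t in Ioc (0:ℝ) 1, f t) ≤ ∫ t in Ioc (0:ℝ) 1, lam * t ^ (-γ₁) :=
            setIntegral_mono_on hint1 hmaj1 measurableSet_Ioc hfub1
          _ = lam * (1 - γ₁)⁻¹ := by rw [integral_const_mul, hJ1]
      have hmaj2' : IntegrableOn (fun t : ℝ => lam * t ^ (-γ₂)) (Ioi (1:ℝ)) :=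
        (integrableOn_Ioi_rpow_of_lt (by linarith : (-γ₂:ℝ) < -1) one_pos).const_mul lam
      have hB : (∫ t in Ioi (1:ℝ), f t) ≤ lam * (γ₂ - 1)⁻¹ := by
        calc (∫ t in Ioi (1:ℝ), f t) ≤ ∫ t in Ioi (1:ℝ), lam * t ^ (-γ₂) :=
            setIntegral_mono_on hint2 hmaj2' measurableSet_Ioi hfub2
          _ = lam * (γ₂ - 1)⁻¹ := by rw [integral_const_mul, hJ2]
      have ha3 : (0:ℝ) ≤ γ₁⁻¹ + 1 := by positivity
      have hCuC : Cu * lam ≤ C * lam := mul_le_mul_of_nonneg_right hCu_le_C hl.le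
      rw [hsplit]
      have hsum : lam * (1 - γ₁)⁻¹ + lam * (γ₂ - 1)⁻¹ ≤ Cu * lam := by
        rw [hCu]; nlinarith
      exact le_trans (add_le_add hA hB) (le_trans hsum hCuC)
  · -- large lam
    have hlam1 : (1:ℝ) ≤ lam := hlam.le
    have hinv0 : (0:ℝ) < lam⁻¹ := inv_pos.2 hl
    have hinv1 : lam⁻¹ ≤ 1 := by
      rw [inv_le_one_iff₀]; right; exact hlam1
    have hm : min (lam ^ γ₁) lam = lam ^ γ₁ := min_eq_left (by
      calc lam ^ γ₁ ≤ lam ^ (1:ℝ) := Real.rpow_le_rpow_of_exponent_le hlam1 h2.le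
        _ = lam := Real.rpow_one lam)
    have hlg1 : (1:ℝ) ≤ lam ^ γ₁ := by
      calc (1:ℝ) = lam ^ (0:ℝ) := (Real.rpow_zero lam).symm
        _ ≤ lam ^ γ₁ := Real.rpow_le_rpow_of_exponent_le hlam1 h1.le
    have hlgpos : (0:ℝ) < lam ^ γ₁ := Real.rpow_pos_of_pos hl γ₁
    rw [hm]
    constructor
    · -- lower bound
      have h2l0 : (0:ℝ) < (2*lam)⁻¹ := by positivity
      have hhalf : (2*lam)⁻¹ < lam⁻¹ := by
        rw [mul_inv]
        have := inv_pos.2 hl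
        linarith
      have hsub : Ioc ((2*lam)⁻¹) lam⁻¹ ⊆ Ioi (0:ℝ) := fun t ht => lt_trans h2l0 ht.1
      have hlaminv : lam * lam⁻¹ = 1 := mul_inv_cancel₀ hl.ne'
      have h1g : 0 < lam ^ (1+γ₁) := Real.rpow_pos_of_pos hl _
      have hprod : lam * lam ^ γ₁ = lam ^ (1+γ₁) := by
        rw [Real.rpow_add hl, Real.rpow_one]
      have hconstlb : ∀ t ∈ Ioc ((2*lam)⁻¹) lam⁻¹, 4⁻¹ * lam ^ (1+γ₁) ≤ f t := by
        rintro t ⟨ht1, ht2⟩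
        have ht0 : (0:ℝ) < t := lt_trans h2l0 ht1
        have htle1 : t ≤ 1 := le_trans ht2 hinv1
        have e : f t = (1 - Real.exp (-lam * t)) / (t * t ^ γ₁) := by
          rw [hf]; simp only; rw [hmax_lo t ht0 htle1]
        have hd : 0 < t * t ^ γ₁ := mul_pos ht0 (Real.rpow_pos_of_pos ht0 γ₁)
        rw [e, le_div_iff₀ hd]
        have hxu : lam * t ≤ 1 := by
          calc lam * t ≤ lam * lam⁻¹ := by gcongr
            _ = 1 := hlaminv
        have hxl : (2:ℝ)⁻¹ < lam * t := by
          have h6 := (mul_lt_mul_iff_right₀ hl).2 ht1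
          calc (2:ℝ)⁻¹ = lam * (2*lam)⁻¹ := by field_simp
            _ < lam * t := h6
        have hnumlb : 4⁻¹ ≤ 1 - Real.exp (-lam * t) := by
          have hexp := aux_exp_ge (by positivity : (0:ℝ) ≤ lam * t)
          have h7 : (4:ℝ)⁻¹ ≤ lam * t / (1 + lam * t) := by
            rw [le_div_iff₀ (by linarith)]
            linarith
          rw [neg_mul]
          linarith
        have hdenub : t * t ^ γ₁ ≤ (lam ^ (1+γ₁))⁻¹ := by
          have h4 : t ^ γ₁ ≤ (lam⁻¹) ^ γ₁ := Real.rpow_le_rpow ht0.le ht2 h1.le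
          calc t * t ^ γ₁ ≤ lam⁻¹ * (lam⁻¹) ^ γ₁ :=
              mul_le_mul ht2 h4 (Real.rpow_pos_of_pos ht0 γ₁).le hinv0.le
            _ = (lam * lam ^ γ₁)⁻¹ := by rw [Real.inv_rpow hl.le, mul_inv]
            _ = (lam ^ (1+γ₁))⁻¹ := by rw [hprod]
        calc 4⁻¹ * lam ^ (1+γ₁) * (t * t ^ γ₁)
            ≤ 4⁻¹ * lam ^ (1+γ₁) * (lam ^ (1+γ₁))⁻¹ := by gcongr
          _ = 4⁻¹ := by rw [mul_assoc, mul_inv_cancel₀ h1g.ne', mul_one]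
          _ ≤ 1 - Real.exp (-lam * t) := hnumlb
      have hμ : volume (Ioc ((2*lam)⁻¹) lam⁻¹) ≠ ⊤ := measure_Ioc_lt_top.ne
      have hgc := setIntegral_ge_of_const_le measurableSet_Ioc hμ hconstlb (hint.mono_set hsub)
      have hvol : (volume (Ioc ((2*lam)⁻¹) lam⁻¹)).toReal = (2*lam)⁻¹ := by
        rw [Real.volume_Ioc, ENNReal.toReal_ofReal (by linarith)]
        field_simp
        ring
      rw [measureReal_def, hvol, smul_eq_mul, mul_comm ((2*lam)⁻¹)] at hgc
      have hval : 4⁻¹ * lam ^ (1+γ₁) * (2*lam)⁻¹ = 8⁻¹ * lam ^ γ₁ := by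
        rw [show (1+γ₁:ℝ) = γ₁ + 1 by ring, Real.rpow_add hl, Real.rpow_one, mul_inv]
        field_simp
        ring
      rw [hval] at hgc
      have hmono := setIntegral_mono_set hint
        ((ae_restrict_iff' measurableSet_Ioi).2 (ae_of_all _ fun t ht => hf0 t ht))
        (HasSubset.Subset.eventuallyLE hsub)
      have h8 : C⁻¹ * lam ^ γ₁ ≤ 8⁻¹ * lam ^ γ₁ :=
        mul_le_mul_of_nonneg_right (le_trans hCinv_le_c (min_le_right _ _)) hlgpos.le
      exact le_trans h8 (le_trans hgc hmono)
    · -- upper bound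
      have hsub1 : Ioc (0:ℝ) lam⁻¹ ⊆ Ioc (0:ℝ) 1 := Ioc_subset_Ioc_right hinv1
      have hsub2 : Ioc lam⁻¹ (1:ℝ) ⊆ Ioc (0:ℝ) 1 := Ioc_subset_Ioc_left hinv0.le
      have hsplit2 : (∫ t in Ioc (0:ℝ) 1, f t)
          = (∫ t in Ioc (0:ℝ) lam⁻¹, f t) + ∫ t in Ioc lam⁻¹ (1:ℝ), f t := by
        rw [← Ioc_union_Ioc_eq_Ioc hinv0.le hinv1]
        exact setIntegral_union (Ioc_disjoint_Ioc_of_le le_rfl) measurableSet_Ioc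
          (hint1.mono_set hsub1) (hint1.mono_set hsub2)
      have hprod : lam * lam ^ (γ₁ - 1) = lam ^ γ₁ := by
        nth_rewrite 1 [← Real.rpow_one lam]
        rw [← Real.rpow_add hl]
        ring_nf
      have hK1 : (∫ t in Ioc (0:ℝ) lam⁻¹, lam * t ^ (-γ₁)) = lam ^ γ₁ * (1-γ₁)⁻¹ := by
        rw [integral_const_mul, ← intervalIntegral.integral_of_le hinv0.le,
          integral_rpow (Or.inl (by linarith : (-1:ℝ) < -γ₁)),
          Real.zero_rpow (by intro h; linarith), sub_zero,
          Real.inv_rpow hl.le, ← Real.rpow_neg hl.le,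
          show (-(-γ₁+1) : ℝ) = γ₁ - 1 by ring,
          show (-γ₁+1 : ℝ) = 1-γ₁ by ring, div_eq_mul_inv, ← mul_assoc, hprod]
      have hB1 : (∫ t in Ioc (0:ℝ) lam⁻¹, f t) ≤ lam ^ γ₁ * (1-γ₁)⁻¹ := by
        rw [← hK1]
        exact setIntegral_mono_on (hint1.mono_set hsub1) (hmaj1.mono_set hsub1)
          measurableSet_Ioc (fun t ht => hfub1 t (hsub1 ht))
      have hne : (-1 - γ₁ : ℝ) ≠ -1 := by intro h; linarith
      have hK2 : (∫ t in Ioc lam⁻¹ (1:ℝ), t ^ (-1-γ₁)) = (lam ^ γ₁ - 1) / γ₁ := by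
        rw [← intervalIntegral.integral_of_le hinv1,
          integral_rpow (Or.inr ⟨hne, notMem_uIcc_of_lt hinv0 one_pos⟩),
          show (-1-γ₁+1 : ℝ) = -γ₁ by ring, Real.one_rpow,
          Real.inv_rpow hl.le, ← Real.rpow_neg hl.le, neg_neg]
        field_simp [h1.ne']
        ring
      have hmaj3 : IntegrableOn (fun t : ℝ => t ^ (-1-γ₁)) (Ioc lam⁻¹ (1:ℝ)) :=
        (intervalIntegral.intervalIntegrable_rpow (μ := volume)
          (Or.inr (notMem_uIcc_of_lt hinv0 one_pos))).1
      have hB2 : (∫ t in Ioc lam⁻¹ (1:ℝ), f t) ≤ lam ^ γ₁ * γ₁⁻¹ := by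
        have h13 := setIntegral_mono_on (hint1.mono_set hsub2) hmaj3
          measurableSet_Ioc (fun t ht => hfub4 t (hsub2 ht))
        rw [hK2] at h13
        have h14 : (0:ℝ) ≤ γ₁⁻¹ := (inv_pos.2 h1).le
        have h9 : (lam ^ γ₁ - 1)/γ₁ ≤ lam ^ γ₁ * γ₁⁻¹ := by
          rw [div_eq_mul_inv]
          nlinarith
        linarith
      have hB3 : (∫ t in Ioi (1:ℝ), f t) ≤ lam ^ γ₁ * 1 := by
        have h15 := setIntegral_mono_on hint2 hmaj2 measurableSet_Ioi hfub3
        rw [hJ3] at h15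
        have h10 : γ₂⁻¹ ≤ 1 := by
          rw [inv_eq_one_div, div_le_iff₀ (by linarith : (0:ℝ) < γ₂)]
          linarith
        rw [mul_one]
        linarith
      rw [hsplit, hsplit2]
      have h12 : (1-γ₁)⁻¹ + γ₁⁻¹ + 1 ≤ C := by
        have hg2 : (0:ℝ) < (γ₂-1)⁻¹ := inv_pos.2 (by linarith)
        have h16 : (1-γ₁)⁻¹ + γ₁⁻¹ + 1 ≤ Cu := by rw [hCu]; linarith
        exact le_trans h16 hCu_le_C
      have h17 := mul_le_mul_of_nonneg_right h12 hlgpos.le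
      nlinarith [hB1, hB2, hB3]

theorem stmt_15 (β γ₁ γ₂ : ℝ) (hβ : 2 ≤ β) (hγ₁ : γ₁ ∈ Ioo (0 : ℝ) 1)
    (hγ₂ : 1 < γ₂) :
    (∃ C : ℝ, 1 ≤ C ∧ ∀ r : ℝ, 0 < r →
        C⁻¹ * min (r ^ (-(γ₁ * β))) (r ^ (-β)) ≤
          (∫ t in Ioi (0 : ℝ),
            (1 - Real.exp (-(r ^ β)⁻¹ * t)) / (t * max (t ^ γ₁) (t ^ γ₂))) ∧
        (∫ t in Ioi (0 : ℝ),
            (1 - Real.exp (-(r ^ β)⁻¹ * t)) / (t * max (t ^ γ₁) (t ^ γ₂))) ≤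
          C * min (r ^ (-(γ₁ * β))) (r ^ (-β))) ∧
    (∃ C : ℝ, 1 ≤ C ∧ ∀ r : ℝ, 0 < r →
        C⁻¹ * min (r ^ (-(γ₁ * β))) (r ^ (-(γ₂ * β))) ≤
          (max (r ^ (γ₁ * β)) (r ^ (γ₂ * β)))⁻¹ ∧
        (max (r ^ (γ₁ * β)) (r ^ (γ₂ * β)))⁻¹ ≤
          C * min (r ^ (-(γ₁ * β))) (r ^ (-(γ₂ * β)))) ∧
    ¬ (∃ C : ℝ, 1 ≤ C ∧ ∀ r : ℝ, 0 < r →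
        C⁻¹ * (max (r ^ (γ₁ * β)) (r ^ (γ₂ * β)))⁻¹ ≤
          (∫ t in Ioi (0 : ℝ),
            (1 - Real.exp (-(r ^ β)⁻¹ * t)) / (t * max (t ^ γ₁) (t ^ γ₂))) ∧
        (∫ t in Ioi (0 : ℝ),
            (1 - Real.exp (-(r ^ β)⁻¹ * t)) / (t * max (t ^ γ₁) (t ^ γ₂))) ≤
          C * (max (r ^ (γ₁ * β)) (r ^ (γ₂ * β)))⁻¹) := by
  have hβ0 : (0:ℝ) < β := by linarith
  obtain ⟨C₁, hC₁, hkey⟩ := key γ₁ γ₂ hγ₁.1 hγ₁.2 hγ₂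
  have part1 : (∃ C : ℝ, 1 ≤ C ∧ ∀ r : ℝ, 0 < r →
      C⁻¹ * min (r ^ (-(γ₁ * β))) (r ^ (-β)) ≤
        (∫ t in Ioi (0 : ℝ),
          (1 - Real.exp (-(r ^ β)⁻¹ * t)) / (t * max (t ^ γ₁) (t ^ γ₂))) ∧
      (∫ t in Ioi (0 : ℝ),
          (1 - Real.exp (-(r ^ β)⁻¹ * t)) / (t * max (t ^ γ₁) (t ^ γ₂))) ≤
        C * min (r ^ (-(γ₁ * β))) (r ^ (-β))) := by
    refine ⟨C₁, hC₁, fun r hr => ?_⟩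
    have hrb : 0 < r ^ β := Real.rpow_pos_of_pos hr β
    have hlam : 0 < (r ^ β)⁻¹ := inv_pos.2 hrb
    have e1 : r ^ (-β) = (r ^ β)⁻¹ := Real.rpow_neg hr.le β
    have e2 : r ^ (-(γ₁ * β)) = ((r ^ β)⁻¹) ^ γ₁ := by
      rw [show (-(γ₁ * β) : ℝ) = (-β) * γ₁ by ring, Real.rpow_mul hr.le, e1]
    rw [e1, e2]
    exact hkey ((r ^ β)⁻¹) hlam
  refine ⟨part1, ?_, ?_⟩
  · refine ⟨1, le_refl 1, fun r hr => ?_⟩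
    have e3 : min (r ^ (-(γ₁ * β))) (r ^ (-(γ₂ * β))) =
        (max (r ^ (γ₁ * β)) (r ^ (γ₂ * β)))⁻¹ := by
      rw [Real.rpow_neg hr.le, Real.rpow_neg hr.le]
      rcases le_total (r ^ (γ₁ * β)) (r ^ (γ₂ * β)) with h | h
      · rw [max_eq_right h, min_eq_right (inv_anti₀ (Real.rpow_pos_of_pos hr _) h)]
      · rw [max_eq_left h, min_eq_left (inv_anti₀ (Real.rpow_pos_of_pos hr _) h)]
    rw [e3, inv_one, one_mul]
    exact ⟨le_refl _, le_refl _⟩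
  · rintro ⟨C, hC, hall⟩
    obtain ⟨C₁', hC₁', h₁⟩ := part1
    set e : ℝ := (γ₂ - 1) * β with he
    have he0 : 0 < e := mul_pos (by linarith) hβ0
    have hK0 : (0:ℝ) < C₁' * C + 1 := by nlinarith
    set r : ℝ := (C₁' * C + 1) ^ e⁻¹ with hr_def
    have hr0 : 0 < r := Real.rpow_pos_of_pos hK0 _
    have hr1 : 1 ≤ r := Real.one_le_rpow (by nlinarith : (1:ℝ) ≤ C₁' * C + 1) (inv_pos.2 he0).le
    have hre : r ^ e = C₁' * C + 1 := by
      rw [hr_def, ← Real.rpow_mul hK0.le, inv_mul_cancel₀ he0.ne', Real.rpow_one]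
    have hlow := (h₁ r hr0).1
    have hupp := (hall r hr0).2
    have hmin : min (r ^ (-(γ₁ * β))) (r ^ (-β)) = r ^ (-β) :=
      min_eq_right (Real.rpow_le_rpow_of_exponent_le hr1
        (by nlinarith [hγ₁.1, hγ₁.2] : -β ≤ -(γ₁ * β)))
    have hmaxx : max (r ^ (γ₁ * β)) (r ^ (γ₂ * β)) = r ^ (γ₂ * β) :=
      max_eq_right (Real.rpow_le_rpow_of_exponent_le hr1
        (by nlinarith [hγ₁.1, hγ₁.2] : γ₁ * β ≤ γ₂ * β))
    rw [hmin] at hlow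
    rw [hmaxx] at hupp
    have hIlow : C₁'⁻¹ * r ^ (-β) ≤ C * (r ^ (γ₂ * β))⁻¹ := le_trans hlow hupp
    have hpb : 0 < r ^ β := Real.rpow_pos_of_pos hr0 β
    have hPQ : r ^ (γ₂ * β) = (C₁' * C + 1) * r ^ β := by
      rw [show (γ₂ * β : ℝ) = (γ₂ - 1) * β + β by ring, Real.rpow_add hr0, ← he, hre]
    rw [hPQ, mul_inv, Real.rpow_neg hr0.le] at hIlow
    have h5 : C₁'⁻¹ ≤ C * (C₁' * C + 1)⁻¹ := by
      have hx : 0 < (r ^ β)⁻¹ := inv_pos.2 hpb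
      rw [← mul_assoc] at hIlow
      exact le_of_mul_le_mul_right hIlow hx
    have hC₁0 : 0 < C₁' := lt_of_lt_of_le one_pos hC₁'
    have hC0' : 0 < C := lt_of_lt_of_le one_pos hC
    have h6 : 1 * (C₁' * C + 1) ≤ C * C₁' := by
      rw [inv_eq_one_div] at h5
      rw [show C * (C₁' * C + 1)⁻¹ = C / (C₁' * C + 1) by rw [div_eq_mul_inv]] at h5
      exact (div_le_div_iff₀ hC₁0 hK0).1 h5
    nlinarith
end

section
/- Suppose there exist C > 0 and 0 < a < 1 such that ψ(φ⁻¹(T))/ψ(φ⁻¹(t)) ≤ C (T/t)^{a} for all 0 < t ≤ T, where φ, ψ are scale functions. Then the Bernstein function φ̄(λ) := ∫₀^∞ (1 - e^{-λt})/(t ψ(φ⁻¹(t))) dt satisfies φ̄(φ(r)⁻¹) ≃ 1/ψ(r) for all r > 0. -/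
open Real Set MeasureTheory Metric

lemma aux_surj {β₁ β₂ : ℝ} {φ : ℝ → ℝ} (hβ₁ : 0 < β₁) (hφ : LU β₁ β₂ φ) :
    ∀ t : ℝ, 0 ≤ t → ∃ s, 0 ≤ s ∧ φ s = t := by
  obtain ⟨hc, hm, h0, h1, C, hC1, hC⟩ := hφ
  intro t ht
  rcases eq_or_lt_of_le ht with h | h
  · exact ⟨0, le_rfl, by rw [h0, h]⟩
  · have hC0 : (0:ℝ) < C := lt_of_lt_of_le one_pos hC1
    set M : ℝ := max 1 ((C * t) ^ (1/β₁)) with hMdef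
    have hM1 : (1:ℝ) ≤ M := le_max_left _ _
    have hM0 : (0:ℝ) ≤ M := zero_le_one.trans hM1
    have hMb : C * t ≤ M ^ β₁ := by
      have h2 : (C * t) ^ (1/β₁) ≤ M := le_max_right _ _
      have h3 : ((C * t) ^ (1/β₁)) ^ β₁ ≤ M ^ β₁ :=
        Real.rpow_le_rpow (Real.rpow_nonneg (by positivity) _) h2 hβ₁.le
      rwa [← Real.rpow_mul (by positivity), one_div, inv_mul_cancel₀ hβ₁.ne', Real.rpow_one] at h3
    have hφM : t ≤ φ M := by
      have h4 := (hC 1 M one_pos hM1).1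
      rw [h1, div_one, div_one] at h4
      calc t = C⁻¹ * (C * t) := by field_simp
        _ ≤ C⁻¹ * M ^ β₁ := mul_le_mul_of_nonneg_left hMb (by positivity)
        _ ≤ φ M := h4
    have h5 : t ∈ Icc (φ 0) (φ M) := ⟨by rw [h0]; exact ht, hφM⟩
    obtain ⟨s, hs, hst⟩ := intermediate_value_Icc hM0 (hc.mono Icc_subset_Ici_self) h5
    exact ⟨s, hs.1, hst⟩

lemma aux_inv_nonneg {β₁ β₂ : ℝ} {φ φinv : ℝ → ℝ} (hβ₁ : 0 < β₁) (hφ : LU β₁ β₂ φ)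
    (hinv₁ : ∀ r : ℝ, 0 ≤ r → φinv (φ r) = r) :
    ∀ t : ℝ, 0 ≤ t → 0 ≤ φinv t := by
  intro t ht
  obtain ⟨s, hs, rfl⟩ := aux_surj hβ₁ hφ t ht
  rw [hinv₁ s hs]; exact hs

lemma aux_inv_mono {β₁ β₂ : ℝ} {φ φinv : ℝ → ℝ} (hφ : LU β₁ β₂ φ)
    (hinv₂ : ∀ t : ℝ, 0 ≤ t → φ (φinv t) = t)
    (hnn : ∀ t : ℝ, 0 ≤ t → 0 ≤ φinv t) :
    ∀ s t : ℝ, 0 ≤ s → s ≤ t → φinv s ≤ φinv t := by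
  intro s t hs hst
  by_contra hlt
  push_neg at hlt
  have h2 := hφ.2.1 (mem_Ici.2 (hnn t (hs.trans hst))) (mem_Ici.2 (hnn s hs)) hlt
  rw [hinv₂ s hs, hinv₂ t (hs.trans hst)] at h2
  linarith

theorem stmt_17 (β₁ β₂ γ₁ γ₂ a C₀ : ℝ) (hβ₁ : 0 < β₁) (hβ : β₁ ≤ β₂)
    (hγ₁ : 0 < γ₁) (hγ : γ₁ ≤ γ₂) (ha : 0 < a) (ha1 : a < 1) (hC₀ : 0 < C₀)
    (φ ψ φinv : ℝ → ℝ) (hφ : LU β₁ β₂ φ) (hψ : LU γ₁ γ₂ ψ)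
    (hinv₁ : ∀ r : ℝ, 0 ≤ r → φinv (φ r) = r)
    (hinv₂ : ∀ t : ℝ, 0 ≤ t → φ (φinv t) = t)
    (hgrowth : ∀ t T : ℝ, 0 < t → t ≤ T →
      ψ (φinv T) / ψ (φinv t) ≤ C₀ * (T / t) ^ a) :
    ∃ C : ℝ, 1 ≤ C ∧ ∀ r : ℝ, 0 < r →
      C⁻¹ / ψ r ≤
        (∫ t in Ioi (0 : ℝ), (1 - Real.exp (-(φ r)⁻¹ * t)) / (t * ψ (φinv t))) ∧
      (∫ t in Ioi (0 : ℝ), (1 - Real.exp (-(φ r)⁻¹ * t)) / (t * ψ (φinv t))) ≤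
        C / ψ r := by
  have hnn : ∀ t : ℝ, 0 ≤ t → 0 ≤ φinv t := aux_inv_nonneg hβ₁ hφ hinv₁
  have hmono_inv : ∀ s t : ℝ, 0 ≤ s → s ≤ t → φinv s ≤ φinv t :=
    aux_inv_mono hφ hinv₂ hnn
  obtain ⟨hφc, hφm, hφ0, hφ1, Cφ, hCφ1, hCφb⟩ := hφ
  obtain ⟨hψc, hψm, hψ0, hψ1, Cψ, hCψ1, hCψb⟩ := hψ
  have hCφ0 : (0:ℝ) < Cφ := one_pos.trans_le hCφ1
  have hCψ0 : (0:ℝ) < Cψ := one_pos.trans_le hCψ1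
  have hφpos : ∀ r : ℝ, 0 < r → 0 < φ r := fun r hr => by
    have h := hφm (mem_Ici.2 le_rfl) (mem_Ici.2 hr.le) hr
    rwa [hφ0] at h
  have hψpos : ∀ s : ℝ, 0 < s → 0 < ψ s := fun s hs => by
    have h := hψm (mem_Ici.2 le_rfl) (mem_Ici.2 hs.le) hs
    rwa [hψ0] at h
  have hinvpos : ∀ t : ℝ, 0 < t → 0 < φinv t := fun t ht => by
    rcases (hnn t ht.le).lt_or_eq with h | h
    · exact h
    · exfalso
      have h2 := hinv₂ t ht.le
      rw [← h, hφ0] at h2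
      linarith
  have hψinvpos : ∀ t : ℝ, 0 < t → 0 < ψ (φinv t) := fun t ht => hψpos _ (hinvpos t ht)
  -- measurable monotone extension
  set G : ℝ → ℝ := fun t => ψ (φinv (max t 0)) with hGdef
  have hmono2 : ∀ s t : ℝ, 0 ≤ s → s ≤ t → ψ (φinv s) ≤ ψ (φinv t) := by
    intro s t hs hst
    rcases (hmono_inv s t hs hst).lt_or_eq with h | h
    · exact (hψm (mem_Ici.2 (hnn s hs)) (mem_Ici.2 (hnn t (hs.trans hst))) h).le
    · rw [h]
  have hGmono : Monotone G := fun s t hst =>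
    hmono2 _ _ (le_max_right _ _) (max_le_max hst le_rfl)
  have hGmeas : Measurable G := hGmono.measurable
  have hGeq : ∀ t : ℝ, 0 < t → G t = ψ (φinv t) := fun t ht => by
    simp only [hGdef]; rw [max_eq_left ht.le]
  -- constants
  have hβ₂ : (0:ℝ) < β₂ := hβ₁.trans_le hβ
  set ε : ℝ := γ₁ / β₂ with hεdef
  have hε : 0 < ε := div_pos hγ₁ hβ₂
  set K₁ : ℝ := C₀ / (1 - a) with hK₁def
  set K₂ : ℝ := Cψ * Cφ ^ ε / ε with hK₂def
  set Kl : ℝ := (1 - Real.exp (-1)) / (2 ^ ((1:ℝ) + a) * C₀) with hKldef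
  have hexp1 : Real.exp (-1) < 1 := Real.exp_lt_one_iff.2 (by norm_num)
  have hKlpos : 0 < Kl := by
    apply div_pos (by linarith)
    positivity
  have hK₁pos : 0 < K₁ := div_pos hC₀ (by linarith)
  have hK₂pos : 0 < K₂ := by positivity
  refine ⟨max (K₁ + K₂) (max Kl⁻¹ 1), le_max_of_le_right (le_max_right _ _), ?_⟩
  intro r hr
  set R : ℝ := φ r with hRdef
  have hR : 0 < R := hφpos r hr
  have hψr : 0 < ψ r := hψpos r hr
  have hinvR : φinv R = r := hinv₁ r hr.le
  set F : ℝ → ℝ := fun t => (1 - Real.exp (-R⁻¹ * t)) / (t * G t) with hFdef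
  have hFmeas : Measurable F := by
    apply Measurable.div
    · fun_prop
    · exact measurable_id.mul hGmeas
  have hFnn : ∀ t ∈ Ioi (0:ℝ), 0 ≤ F t := by
    intro t ht
    have ht' : (0:ℝ) < t := ht
    apply div_nonneg
    · have h1 : Real.exp (-R⁻¹ * t) ≤ 1 := by
        apply Real.exp_le_one_iff.2
        have : 0 ≤ R⁻¹ * t := by positivity
        linarith [neg_mul R⁻¹ t]
      linarith
    · have h2 := hψinvpos t ht'
      rw [hGeq t ht'] 
      positivity
  -- reciprocal growth bound for small times
  have hrec1 : ∀ t : ℝ, 0 < t → t ≤ R → (ψ (φinv t))⁻¹ ≤ C₀ * (R/t) ^ a / ψ r := by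
    intro t ht htR
    have hg := hgrowth t R ht htR
    rw [hinvR] at hg
    have hψt := hψinvpos t ht
    rw [inv_eq_one_div, div_le_div_iff₀ hψt hψr]
    have h2 : ψ r / ψ (φinv t) * ψ (φinv t) ≤ C₀ * (R/t) ^ a * ψ (φinv t) :=
      mul_le_mul_of_nonneg_right hg hψt.le
    rw [div_mul_cancel₀ _ hψt.ne'] at h2
    linarith
  -- pointwise bound on (0, R]
  have hb1 : ∀ t ∈ Ioc (0:ℝ) R, F t ≤ C₀ / ψ r * R ^ (a-1) * t ^ (-a) := by
    intro t ht
    obtain ⟨ht0, htR⟩ := ht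
    have hψt := hψinvpos t ht0
    have hGt : G t = ψ (φinv t) := hGeq t ht0
    have hnum : 1 - Real.exp (-R⁻¹ * t) ≤ R⁻¹ * t := by
      have h := Real.add_one_le_exp (-(R⁻¹ * t))
      rw [neg_mul]; linarith
    have step1 : F t ≤ (R⁻¹ * t) / (t * ψ (φinv t)) := by
      simp only [hFdef, hGt]
      gcongr
    have step2 : (R⁻¹ * t) / (t * ψ (φinv t)) = R⁻¹ * (ψ (φinv t))⁻¹ := by
      field_simp
    have step3 : R⁻¹ * (ψ (φinv t))⁻¹ ≤ R⁻¹ * (C₀ * (R/t) ^ a / ψ r) :=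
      mul_le_mul_of_nonneg_left (hrec1 t ht0 htR) (by positivity)
    have step4 : R⁻¹ * (C₀ * (R/t) ^ a / ψ r) = C₀ / ψ r * R ^ (a-1) * t ^ (-a) := by
      rw [Real.div_rpow hR.le ht0.le, Real.rpow_sub hR, Real.rpow_one, Real.rpow_neg ht0.le]
      field_simp
    rw [step2] at step1
    rw [step4] at step3
    linarith
  -- pointwise bound on (R, ∞)
  have hb2 : ∀ t ∈ Ioi R, F t ≤ Cψ * Cφ ^ ε * R ^ ε / ψ r * t ^ (-1-ε) := by
    intro t ht
    have ht' : R < t := ht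
    have ht0 : 0 < t := hR.trans ht'
    have hψt := hψinvpos t ht0
    have hGt : G t = ψ (φinv t) := hGeq t ht0
    set s : ℝ := φinv t with hsdef
    have hrs : r ≤ s := by
      rw [← hinvR]; exact hmono_inv R t hR.le ht'.le
    have hs0 : 0 < s := hr.trans_le hrs
    -- lower bound on ψ s
    have hφs : φ s = t := hinv₂ t ht0.le
    have hquot : (t/R) / Cφ ≤ (s/r) ^ β₂ := by
      have h := (hCφb r s hr hrs).2
      rw [hφs, ← hRdef] at h
      rw [div_le_iff₀ hCφ0]
      linarith [mul_comm Cφ ((s/r) ^ β₂)]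
    have hquot2 : ((t/R) / Cφ) ^ ε ≤ (s/r) ^ γ₁ := by
      have h := Real.rpow_le_rpow (by positivity) hquot hε.le
      rwa [← Real.rpow_mul (by positivity), hεdef, mul_div_cancel₀ _ hβ₂.ne'] at h
    have hlb : Cψ⁻¹ * (((t/R) / Cφ) ^ ε) * ψ r ≤ ψ s := by
      have h := (hCψb r s hr hrs).1
      have h2 : Cψ⁻¹ * (((t/R)/Cφ) ^ ε) ≤ ψ s / ψ r := by
        calc Cψ⁻¹ * (((t/R)/Cφ) ^ ε) ≤ Cψ⁻¹ * (s/r) ^ γ₁ :=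
              mul_le_mul_of_nonneg_left hquot2 (by positivity)
          _ ≤ ψ s / ψ r := h
      calc Cψ⁻¹ * (((t/R)/Cφ) ^ ε) * ψ r ≤ (ψ s / ψ r) * ψ r :=
            mul_le_mul_of_nonneg_right h2 hψr.le
        _ = ψ s := div_mul_cancel₀ _ hψr.ne'
    have hlb2 : Cψ⁻¹ * Cφ⁻¹ ^ ε * (t/R) ^ ε * ψ r ≤ ψ s := by
      have e : ((t/R)/Cφ) ^ ε = (t/R) ^ ε * Cφ⁻¹ ^ ε := by
        rw [div_eq_mul_inv (t/R) Cφ, Real.mul_rpow (by positivity) (by positivity)]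
      calc Cψ⁻¹ * Cφ⁻¹ ^ ε * (t/R) ^ ε * ψ r
          = Cψ⁻¹ * (((t/R)/Cφ) ^ ε) * ψ r := by rw [e]; ring
        _ ≤ ψ s := hlb
    -- conclude
    have hnum : 1 - Real.exp (-R⁻¹ * t) ≤ 1 := by
      have := Real.exp_pos (-R⁻¹ * t); linarith
    have hden_pos : 0 < t * ψ s := by positivity
    have step1 : F t ≤ 1 / (t * ψ s) := by
      simp only [hFdef, hGt, ← hsdef]
      gcongr
    have hdenl : t * (Cψ⁻¹ * Cφ⁻¹ ^ ε * (t/R) ^ ε * ψ r) ≤ t * ψ s :=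
      mul_le_mul_of_nonneg_left hlb2 ht0.le
    have step2 : 1 / (t * ψ s) ≤ 1 / (t * (Cψ⁻¹ * Cφ⁻¹ ^ ε * (t/R) ^ ε * ψ r)) := by
      apply one_div_le_one_div_of_le _ hdenl
      positivity
    have step3 : 1 / (t * (Cψ⁻¹ * Cφ⁻¹ ^ ε * (t/R) ^ ε * ψ r))
        = Cψ * Cφ ^ ε * R ^ ε / ψ r * t ^ (-1-ε) := by
      rw [Real.div_rpow ht0.le hR.le, Real.rpow_sub ht0, Real.rpow_neg ht0.le, Real.rpow_one,
        Real.inv_rpow hCφ0.le]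
      field_simp
    rw [step3] at step2
    linarith
  -- integrability and values of the comparison integrals
  have hInt1 : IntegrableOn (fun t : ℝ => t ^ (-a)) (Ioc 0 R) := by
    have h := intervalIntegral.intervalIntegrable_rpow' (a := (0:ℝ)) (b := R) (r := -a)
      (by linarith)
    rwa [intervalIntegrable_iff_integrableOn_Ioc_of_le hR.le] at h
  have hIval1 : ∫ t in Ioc (0:ℝ) R, t ^ (-a) = R ^ (1-a) / (1-a) := by
    rw [← intervalIntegral.integral_of_le hR.le, integral_rpow (Or.inl (by linarith))]
    rw [Real.zero_rpow (by intro h; linarith : -a + 1 ≠ 0), show -a + 1 = 1 - a by ring]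
    ring
  have hInt2 : IntegrableOn (fun t : ℝ => t ^ (-1-ε)) (Ioi R) :=
    integrableOn_Ioi_rpow_of_lt (by linarith) hR
  have hIval2 : ∫ t in Ioi R, t ^ (-1-ε) = R ^ (-ε) / ε := by
    rw [integral_Ioi_rpow_of_lt (by linarith) hR, show (-1) - ε + 1 = -ε by ring,
      neg_div_neg_eq]
  -- integrability of F
  have hFub1 : IntegrableOn F (Ioc 0 R) := by
    apply Integrable.mono (hInt1.const_mul (C₀ / ψ r * R ^ (a-1)))
      hFmeas.aestronglyMeasurable.restrict
    filter_upwards [ae_restrict_mem measurableSet_Ioc] with t ht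
    rw [Real.norm_of_nonneg (hFnn t (Ioc_subset_Ioi_self ht))]
    exact (hb1 t ht).trans (le_abs_self _)
  have hFub2 : IntegrableOn F (Ioi R) := by
    apply Integrable.mono (hInt2.const_mul (Cψ * Cφ ^ ε * R ^ ε / ψ r))
      hFmeas.aestronglyMeasurable.restrict
    filter_upwards [ae_restrict_mem measurableSet_Ioi] with t ht
    rw [Real.norm_of_nonneg (hFnn t (lt_trans hR ht))]
    exact (hb2 t ht).trans (le_abs_self _)
  have hFint : IntegrableOn F (Ioi 0) := by
    rw [← Ioc_union_Ioi_eq_Ioi hR.le]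
    exact hFub1.union hFub2
  have hsplit : ∫ t in Ioi (0:ℝ), F t = (∫ t in Ioc (0:ℝ) R, F t) + ∫ t in Ioi R, F t := by
    rw [← setIntegral_union (Ioc_disjoint_Ioi le_rfl) measurableSet_Ioi hFub1 hFub2,
      Ioc_union_Ioi_eq_Ioi hR.le]
  -- upper bounds
  have hup1 : ∫ t in Ioc (0:ℝ) R, F t ≤ K₁ / ψ r := by
    have h := setIntegral_mono_on hFub1 (hInt1.const_mul (C₀ / ψ r * R ^ (a-1)))
      measurableSet_Ioc hb1
    rw [integral_const_mul, hIval1] at h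
    have eR : R ^ (a-1) * R ^ (1-a) = 1 := by
      rw [← Real.rpow_add hR]; norm_num
    have e : C₀ / ψ r * R ^ (a-1) * (R ^ (1-a) / (1-a)) = K₁ / ψ r := by
      have e2 : C₀ / ψ r * R ^ (a-1) * (R ^ (1-a) / (1-a))
          = C₀ / ψ r * (R ^ (a-1) * R ^ (1-a)) / (1-a) := by ring
      rw [e2, eR, mul_one, div_right_comm, ← hK₁def]
    rw [e] at h
    exact h
  have hup2 : ∫ t in Ioi R, F t ≤ K₂ / ψ r := by
    have h := setIntegral_mono_on hFub2 (hInt2.const_mul (Cψ * Cφ ^ ε * R ^ ε / ψ r))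
      measurableSet_Ioi hb2
    rw [integral_const_mul, hIval2] at h
    have eR : R ^ ε * R ^ (-ε) = 1 := by
      rw [← Real.rpow_add hR]; norm_num
    have e : Cψ * Cφ ^ ε * R ^ ε / ψ r * (R ^ (-ε) / ε) = K₂ / ψ r := by
      have e2 : Cψ * Cφ ^ ε * R ^ ε / ψ r * (R ^ (-ε) / ε)
          = Cψ * Cφ ^ ε * (R ^ ε * R ^ (-ε)) / ψ r / ε := by ring
      rw [e2, eR, mul_one, div_right_comm, ← hK₂def]
    rw [e] at h
    exact h
  have hupper : ∫ t in Ioi (0:ℝ), F t ≤ (K₁ + K₂) / ψ r := by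
    rw [hsplit, add_div]
    exact add_le_add hup1 hup2
  -- lower bound
  have hFubmid : IntegrableOn F (Ioc R (2*R)) := hFub2.mono_set Ioc_subset_Ioi_self
  have hlowpt : ∀ t ∈ Ioc R (2*R),
      (1 - Real.exp (-1)) / (2*R * (C₀ * 2 ^ a * ψ r)) ≤ F t := by
    intro t ht
    obtain ⟨htR, ht2R⟩ := ht
    have ht0 : 0 < t := hR.trans htR
    have hGt : G t = ψ (φinv t) := hGeq t ht0
    have hψt := hψinvpos t ht0
    have h1 : (1:ℝ) ≤ R⁻¹ * t := by
      rw [← inv_mul_cancel₀ hR.ne']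
      exact mul_le_mul_of_nonneg_left htR.le (by positivity)
    have hnum : 1 - Real.exp (-1) ≤ 1 - Real.exp (-R⁻¹ * t) := by
      have h2 : -R⁻¹ * t ≤ -1 := by
        have : -R⁻¹ * t = -(R⁻¹ * t) := by ring
        linarith [this]
      have := Real.exp_le_exp.2 h2
      linarith
    have hgb : ψ (φinv t) ≤ C₀ * 2 ^ a * ψ r := by
      have hg := hgrowth R t hR htR.le
      rw [hinvR] at hg
      have h2 : (t/R) ^ a ≤ 2 ^ a := by
        apply Real.rpow_le_rpow (by positivity) _ ha.le
        rw [div_le_iff₀ hR]; linarith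
      have h3 : ψ (φinv t) / ψ r ≤ C₀ * 2 ^ a :=
        le_trans hg (mul_le_mul_of_nonneg_left h2 hC₀.le)
      calc ψ (φinv t) = ψ (φinv t) / ψ r * ψ r := by field_simp
        _ ≤ C₀ * 2 ^ a * ψ r := mul_le_mul_of_nonneg_right h3 hψr.le
    have hden : t * ψ (φinv t) ≤ 2*R * (C₀ * 2 ^ a * ψ r) :=
      mul_le_mul ht2R hgb hψt.le (by positivity)
    have hd0 : 0 < t * ψ (φinv t) := by positivity
    simp only [hFdef, hGt]
    exact div_le_div₀ (by linarith) hnum hd0 hden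
  have hmid : Kl / ψ r ≤ ∫ t in Ioc R (2*R), F t := by
    have h := setIntegral_mono_on
      (integrableOn_const measure_Ioc_lt_top.ne) hFubmid measurableSet_Ioc hlowpt
    rw [setIntegral_const] at h
    have hvol : (volume (Ioc R (2*R))).toReal = R := by
      rw [Real.volume_Ioc, ENNReal.toReal_ofReal (by linarith)]
      ring
    rw [measureReal_def, hvol, smul_eq_mul] at h
    have h2a : (2:ℝ) ^ ((1:ℝ)+a) = 2 * 2 ^ a := by
      rw [Real.rpow_add (by norm_num), Real.rpow_one]
    have h2an : ((2:ℝ) ^ a) ≠ 0 := by positivity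
    have e : R * ((1 - Real.exp (-1)) / (2*R * (C₀ * 2 ^ a * ψ r))) = Kl / ψ r := by
      rw [hKldef, h2a]
      field_simp
    rw [e] at h
    exact h
  have hlower : Kl / ψ r ≤ ∫ t in Ioi (0:ℝ), F t := by
    refine le_trans hmid (setIntegral_mono_set hFint ?_ ?_)
    · filter_upwards [ae_restrict_mem measurableSet_Ioi] with t ht using hFnn t ht
    · exact HasSubset.Subset.eventuallyLE (fun t ht => lt_trans hR ht.1)
  -- transfer from F to the original integrand
  have hcongr : ∫ t in Ioi (0:ℝ), (1 - Real.exp (-R⁻¹ * t)) / (t * ψ (φinv t))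
      = ∫ t in Ioi (0:ℝ), F t := by
    apply setIntegral_congr_fun measurableSet_Ioi
    intro t ht
    simp only [hFdef]
    rw [hGeq t ht]
  constructor
  · rw [hcongr]
    refine le_trans ?_ hlower
    have hCge : Kl⁻¹ ≤ max (K₁ + K₂) (max Kl⁻¹ 1) := le_max_of_le_right (le_max_left _ _)
    have hinv : (max (K₁ + K₂) (max Kl⁻¹ 1))⁻¹ ≤ Kl := by
      have h := inv_anti₀ (by positivity) hCge
      rwa [inv_inv] at h
    exact (div_le_div_iff_of_pos_right hψr).2 hinv
  · rw [hcongr]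
    refine le_trans hupper ?_
    have hCge : K₁ + K₂ ≤ max (K₁ + K₂) (max Kl⁻¹ 1) := le_max_left _ _
    exact (div_le_div_iff_of_pos_right hψr).2 hCge
end

section
/- Let φ_c, φ_j, ψ be scale functions with φ_c(r) ≤ φ_j(r) for r ∈ (0,1] and φ_c(r) ≥ φ_j(r) for r > 1, φ := φ_c ∧ φ_j, and suppose ∫₀^∞ (1∧t)/(tψ(φ⁻¹(t)))dt < ∞. Define φ̄(λ) := ∫₀^∞ (1-e^{-λt})/(tψ(φ⁻¹(t)))dt. Then there exists C > 0 such that 1/ψ(r) ≤ C φ̄(φ_j(r)⁻¹) for all r ≥ 1. -/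
open Real Set MeasureTheory Metric

theorem stmt_19 (β₁c β₂c β₁j β₂j γ₁ γ₂ : ℝ)
    (h1c : 0 < β₁c) (hc : β₁c ≤ β₂c) (h1j : 0 < β₁j) (hj : β₁j ≤ β₂j)
    (hγ₁ : 0 < γ₁) (hγ : γ₁ ≤ γ₂)
    (φc φj ψ φinv : ℝ → ℝ) (hφc : LU β₁c β₂c φc) (hφj : LU β₁j β₂j φj)
    (hψ : LU γ₁ γ₂ ψ)
    (hcj₁ : ∀ r : ℝ, 0 < r → r ≤ 1 → φc r ≤ φj r)
    (hcj₂ : ∀ r : ℝ, 1 < r → φj r ≤ φc r)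
    (hinv₁ : ∀ r : ℝ, 0 ≤ r → φinv (min (φc r) (φj r)) = r)
    (hinv₂ : ∀ t : ℝ, 0 ≤ t → min (φc (φinv t)) (φj (φinv t)) = t)
    (hint : IntegrableOn (fun t => min 1 t / (t * ψ (φinv t))) (Ioi (0 : ℝ))) :
    ∃ C : ℝ, 0 < C ∧ ∀ r : ℝ, 1 ≤ r →
      1 / ψ r ≤
        C * ∫ t in Ioi (0 : ℝ),
          (1 - Real.exp (-(φj r)⁻¹ * t)) / (t * ψ (φinv t)) := by
  obtain ⟨hφc_cont, hφc_mono, hφc0, hφc1, Cc, hCc, hCcLU⟩ := hφc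
  obtain ⟨hφj_cont, hφj_mono, hφj0, hφj1, Cj, hCj, hCjLU⟩ := hφj
  obtain ⟨hψ_cont, hψ_mono, hψ0, hψ1, Cψ, hCψ, hCψLU⟩ := hψ
  set φ : ℝ → ℝ := fun s => min (φc s) (φj s) with hφdef
  have hCcpos : (0:ℝ) < Cc := lt_of_lt_of_le one_pos hCc
  have hCjpos : (0:ℝ) < Cj := lt_of_lt_of_le one_pos hCj
  have hCψpos : (0:ℝ) < Cψ := lt_of_lt_of_le one_pos hCψ
  -- φc and φj tend to infinity
  have hlow : ∀ (C β : ℝ) (g : ℝ → ℝ), 0 < C → g 1 = 1 →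
      (∀ r R : ℝ, 0 < r → r ≤ R → C⁻¹ * (R / r) ^ β ≤ g R / g r) →
      ∀ R : ℝ, 1 ≤ R → C⁻¹ * R ^ β ≤ g R := by
    intro C β g hCpos hg1 hLU R hR
    have := hLU 1 R one_pos hR
    simpa [hg1] using this
  have htopc : Filter.Tendsto φc Filter.atTop Filter.atTop := by
    apply Filter.tendsto_atTop_mono' Filter.atTop
      (Filter.eventually_atTop.2 ⟨1, fun R hR => hlow Cc β₁c φc hCcpos hφc1 (fun r R hr hrR => (hCcLU r R hr hrR).1) R hR⟩)
    exact (tendsto_rpow_atTop h1c).const_mul_atTop (inv_pos.2 hCcpos)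
  have htopj : Filter.Tendsto φj Filter.atTop Filter.atTop := by
    apply Filter.tendsto_atTop_mono' Filter.atTop
      (Filter.eventually_atTop.2 ⟨1, fun R hR => hlow Cj β₁j φj hCjpos hφj1 (fun r R hr hrR => (hCjLU r R hr hrR).1) R hR⟩)
    exact (tendsto_rpow_atTop h1j).const_mul_atTop (inv_pos.2 hCjpos)
  have htop : Filter.Tendsto φ Filter.atTop Filter.atTop := by
    rw [Filter.tendsto_atTop]
    intro M
    filter_upwards [htopc.eventually_ge_atTop M, htopj.eventually_ge_atTop M] with R h1 h2
    exact le_min h1 h2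
  have hφ0 : φ 0 = 0 := by simp [hφdef, hφc0, hφj0]
  have hφcont : ContinuousOn φ (Ici 0) := fun x hx => (hφc_cont x hx).min (hφj_cont x hx)
  -- surjectivity of φ onto (0, ∞) from [0, ∞)
  have hsurj : ∀ t : ℝ, 0 < t → ∃ s : ℝ, 0 < s ∧ φ s = t := by
    intro t ht
    obtain ⟨M, hM1, hM2⟩ := ((htop.eventually_ge_atTop t).and (Filter.eventually_ge_atTop (0:ℝ))).exists
    have hsub : Icc (0:ℝ) M ⊆ Ici 0 := Icc_subset_Ici_self
    have hIVT := intermediate_value_Icc hM2 (hφcont.mono hsub)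
    have htmem : t ∈ Icc (φ 0) (φ M) := by
      rw [hφ0]; exact ⟨ht.le, hM1⟩
    obtain ⟨s, hs, hst⟩ := hIVT htmem
    refine ⟨s, ?_, hst⟩
    rcases lt_or_eq_of_le hs.1 with h | h
    · exact h
    · exfalso; rw [← h, hφ0] at hst; exact ht.ne hst
  have hψpos : ∀ s : ℝ, 0 < s → 0 < ψ s := by
    intro s hs
    have := hψ_mono (self_mem_Ici) (le_of_lt hs) hs
    rwa [hψ0] at this
  have hψinvpos : ∀ t : ℝ, 0 < t → 0 < ψ (φinv t) := by
    intro t ht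
    obtain ⟨s, hs, hst⟩ := hsurj t ht
    have : φinv t = s := by rw [← hst]; exact hinv₁ s hs.le
    rw [this]; exact hψpos s hs
  -- choose K
  set K : ℝ := (2 * Cj) ^ (β₁j⁻¹) with hKdef
  have hKpow : K ^ β₁j = 2 * Cj := Real.rpow_inv_rpow (by positivity) h1j.ne'
  have hK1 : 1 < K := by
    by_contra h
    push_neg at h
    have : K ^ β₁j ≤ 1 ^ β₁j := by
      apply Real.rpow_le_rpow (by positivity) h h1j.le
    rw [hKpow, Real.one_rpow] at this
    nlinarith
  have hKγpos : (0:ℝ) < K ^ γ₂ := Real.rpow_pos_of_pos (by linarith) _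
  have hexp1 : Real.exp (-1) < 1 := by
    rw [← Real.exp_zero]
    exact Real.exp_lt_exp.2 (by norm_num)
  have hden : (0:ℝ) < 1 - Real.exp (-1) := by linarith
  refine ⟨2 * Cψ * K ^ γ₂ / (1 - Real.exp (-1)), by positivity, ?_⟩
  intro r hr
  set f : ℝ → ℝ := fun t => (1 - Real.exp (-(φj r)⁻¹ * t)) / (t * ψ (φinv t)) with hfdef
  have hrpos : (0:ℝ) < r := lt_of_lt_of_le one_pos hr
  have hφjr1 : 1 ≤ φj r := by
    rw [← hφj1]
    exact hφj_mono.monotoneOn (mem_Ici.2 zero_le_one) (mem_Ici.2 (by linarith)) hr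
  set a : ℝ := φj r with hadef
  set b : ℝ := φj (K * r) with hbdef
  have hapos : (0:ℝ) < a := lt_of_lt_of_le one_pos hφjr1
  have hKr1 : 1 < K * r := by nlinarith
  have hKrpos : (0:ℝ) < K * r := by linarith
  have hrKr : r ≤ K * r := by nlinarith
  have hbpos : (0:ℝ) < b := by
    have := hφj_mono (self_mem_Ici) hKrpos.le hKrpos
    rwa [hφj0] at this
  have hKrr : K * r / r = K := by field_simp
  -- b ≥ 2a
  have h2ab : 2 * a ≤ b := by
    have h := (hCjLU r (K * r) hrpos hrKr).1
    rw [hKrr, hKpow] at h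
    have h2 : Cj⁻¹ * (2 * Cj) = 2 := by field_simp
    rw [h2] at h
    have := (le_div_iff₀ hapos).1 h
    linarith [this]
  -- ψ (K*r) ≤ Cψ * K^γ₂ * ψ r
  have hψrpos : (0:ℝ) < ψ r := hψpos r hrpos
  have hψKrpos : (0:ℝ) < ψ (K * r) := hψpos (K * r) hKrpos
  have hψKr : ψ (K * r) ≤ Cψ * K ^ γ₂ * ψ r := by
    have h := (hCψLU r (K * r) hrpos hrKr).2
    rw [hKrr] at h
    have := (div_le_iff₀ hψrpos).1 h
    linarith [this]
  -- φ agrees with φj on [1, ∞)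
  have hφr : φ r = a := by
    rcases eq_or_lt_of_le hr with h | h
    · simp [hφdef, hadef, ← h, hφc1, hφj1]
    · exact min_eq_right (hcj₂ r h)
  have hφKr : φ (K * r) = b := min_eq_right (hcj₂ (K * r) hKr1)
  -- on [a,b], φinv lands in [r, K*r]
  have hmid : ∀ t ∈ Icc a b, ψ (φinv t) ≤ ψ (K * r) := by
    intro t ht
    have hsub : Icc r (K * r) ⊆ Ici 0 := fun x hx => le_trans hrpos.le hx.1
    have hIVT := intermediate_value_Icc hrKr (hφcont.mono hsub)
    rw [hφr, hφKr] at hIVT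
    obtain ⟨s, hs, hst⟩ := hIVT ht
    have hs0 : 0 ≤ s := le_trans hrpos.le hs.1
    have hinv : φinv t = s := by rw [← hst]; exact hinv₁ s hs0
    rw [hinv]
    exact hψ_mono.monotoneOn (mem_Ici.2 hs0) (mem_Ici.2 hKrpos.le) hs.2
  -- nonnegativity of the integrand
  have hfnn : ∀ t ∈ Ioi (0:ℝ), 0 ≤ f t := by
    intro t ht
    rw [mem_Ioi] at ht
    have hnum : 0 ≤ 1 - Real.exp (-(φj r)⁻¹ * t) := by
      have : Real.exp (-(φj r)⁻¹ * t) ≤ 1 := by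
        rw [← Real.exp_zero]
        apply Real.exp_le_exp.2
        have : 0 ≤ (φj r)⁻¹ * t := mul_nonneg (inv_nonneg.2 hapos.le) ht.le
        linarith
      linarith
    exact div_nonneg hnum (mul_pos ht (hψinvpos t ht)).le
  -- integrability of f on (0, ∞)
  have hlpos : (0:ℝ) < (φj r)⁻¹ := inv_pos.2 hapos
  set g : ℝ → ℝ := fun t => if t ≤ 0 then 0 else (1 - Real.exp (-(φj r)⁻¹ * t)) / min 1 t
    with hgdef
  have hgmeas : Measurable g := by
    apply Measurable.ite
    · exact measurableSet_Iic
    · exact measurable_const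
    · apply Measurable.div
      · fun_prop
      · exact measurable_const.min measurable_id
  have hgbdd : ∀ t : ℝ, ‖g t‖ ≤ max 1 (φj r)⁻¹ := by
    intro t
    by_cases h : t ≤ 0
    · simp only [hgdef, if_pos h, norm_zero]
      exact le_max_of_le_left zero_le_one
    · push_neg at h
      simp only [hgdef, if_neg (not_le.2 h)]
      have hmin : 0 < min 1 t := lt_min one_pos h
      have hexple : Real.exp (-(φj r)⁻¹ * t) ≤ 1 := by
        rw [← Real.exp_zero]
        apply Real.exp_le_exp.2
        linarith [mul_nonneg hlpos.le h.le]
      have hnn : 0 ≤ (1 - Real.exp (-(φj r)⁻¹ * t)) / min 1 t :=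
        div_nonneg (by linarith) hmin.le
      rw [Real.norm_eq_abs, abs_of_nonneg hnn]
      rcases le_total t 1 with h1 | h1
      · rw [min_eq_right h1, div_le_iff₀ h]
        have key : -(φj r)⁻¹ * t + 1 ≤ Real.exp (-(φj r)⁻¹ * t) :=
          Real.add_one_le_exp _
        have : 1 - Real.exp (-(φj r)⁻¹ * t) ≤ (φj r)⁻¹ * t := by linarith
        calc 1 - Real.exp (-(φj r)⁻¹ * t) ≤ (φj r)⁻¹ * t := this
          _ ≤ max 1 (φj r)⁻¹ * t :=
            mul_le_mul_of_nonneg_right (le_max_right _ _) h.le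
      · rw [min_eq_left h1, div_one]
        have := Real.exp_pos (-(φj r)⁻¹ * t)
        exact le_max_of_le_left (by linarith)
  have heq : EqOn (fun t => g t * (min 1 t / (t * ψ (φinv t)))) f (Ioi 0) := by
    intro t ht
    rw [mem_Ioi] at ht
    have hmin : 0 < min 1 t := lt_min one_pos ht
    have hd : 0 < t * ψ (φinv t) := mul_pos ht (hψinvpos t ht)
    simp only [hgdef, hfdef, if_neg (not_le.2 ht)]
    field_simp
    rfl
  have hfint : IntegrableOn f (Ioi 0) := by
    have hi := hint.bdd_mul hgmeas.aestronglyMeasurable (Filter.Eventually.of_forall hgbdd)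
    exact (IntegrableOn.congr_fun hi heq measurableSet_Ioi)
  -- lower bound for the integral
  have hsub : Ioc a b ⊆ Ioi (0:ℝ) := fun t ht => lt_trans hapos ht.1
  have hmono : ∫ t in Ioc a b, f t ≤ ∫ t in Ioi (0:ℝ), f t := by
    apply setIntegral_mono_set hfint
    · exact (ae_restrict_mem measurableSet_Ioi).mono fun t ht => hfnn t ht
    · exact Filter.Eventually.of_forall hsub |>.mono fun t ht => ht
  have hptwise : ∀ t ∈ Ioc a b,
      (1 - Real.exp (-1)) / (b * ψ (K * r)) ≤ f t := by
    intro t ht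
    obtain ⟨ht1, ht2⟩ := ht
    have htpos : 0 < t := lt_trans hapos ht1
    have hnum : 1 - Real.exp (-1) ≤ 1 - Real.exp (-(φj r)⁻¹ * t) := by
      have : -(φj r)⁻¹ * t ≤ -1 := by
        have h1 : (φj r)⁻¹ * a = 1 := inv_mul_cancel₀ hapos.ne'
        have h2 : (φj r)⁻¹ * a ≤ (φj r)⁻¹ * t :=
          mul_le_mul_of_nonneg_left ht1.le hlpos.le
        linarith
      have := Real.exp_le_exp.2 this
      linarith
    have hdd : t * ψ (φinv t) ≤ b * ψ (K * r) := by
      have h1 : ψ (φinv t) ≤ ψ (K * r) := hmid t ⟨ht1.le, ht2⟩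
      have h2 : 0 < ψ (φinv t) := hψinvpos t htpos
      exact mul_le_mul ht2 h1 h2.le hbpos.le
    have hdpos : 0 < t * ψ (φinv t) := mul_pos htpos (hψinvpos t htpos)
    exact div_le_div₀ (by linarith [Real.exp_pos (-(φj r)⁻¹ * t)]) hnum hdpos hdd
  have hIocint : IntegrableOn f (Ioc a b) := hfint.mono_set hsub
  have hconst := setIntegral_ge_of_const_le_real measurableSet_Ioc
    (measure_Ioc_lt_top).ne hptwise hIocint
  rw [Real.volume_real_Ioc_of_le (by linarith)] at hconst
  -- combine
  have hL : (1 - Real.exp (-1)) / (b * ψ (K * r)) * (b - a) ≤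
      ∫ t in Ioi (0:ℝ), f t := le_trans hconst hmono
  have hCnn : (0:ℝ) ≤ 2 * Cψ * K ^ γ₂ / (1 - Real.exp (-1)) := by positivity
  have hfinal : 1 / ψ r ≤ 2 * Cψ * K ^ γ₂ / (1 - Real.exp (-1)) *
      ((1 - Real.exp (-1)) / (b * ψ (K * r)) * (b - a)) := by
    have hrw : 2 * Cψ * K ^ γ₂ / (1 - Real.exp (-1)) *
        ((1 - Real.exp (-1)) / (b * ψ (K * r)) * (b - a)) =
        2 * Cψ * K ^ γ₂ * (b - a) / (b * ψ (K * r)) := by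
      field_simp
    rw [hrw, div_le_div_iff₀ hψrpos (mul_pos hbpos hψKrpos)]
    have hb2 : b ≤ 2 * (b - a) := by linarith
    have e1 : b * ψ (K * r) ≤ b * (Cψ * K ^ γ₂ * ψ r) :=
      mul_le_mul_of_nonneg_left hψKr hbpos.le
    have e2 : b * (Cψ * K ^ γ₂ * ψ r) ≤ 2 * (b - a) * (Cψ * K ^ γ₂ * ψ r) :=
      mul_le_mul_of_nonneg_right hb2 (by positivity)
    linarith [e1, e2]
  calc 1 / ψ r ≤ 2 * Cψ * K ^ γ₂ / (1 - Real.exp (-1)) *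
      ((1 - Real.exp (-1)) / (b * ψ (K * r)) * (b - a)) := hfinal
    _ ≤ 2 * Cψ * K ^ γ₂ / (1 - Real.exp (-1)) *
        ∫ t in Ioi (0:ℝ), f t := mul_le_mul_of_nonneg_left hL hCnn
end
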